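/- Let s ≥ 1, ρ > 0 and u ∈ H₀^{ρ,s}. For any real spectral parameter κ > 100 C_s ‖u‖_{ρ,s}, the point −κ belongs to the resolvent set of the Lax operator L_u acting on H₊^{ρ,s}: the resolvent R(κ,u) = (L_u + κ)^{−1} is a bounded linear operator on H₊^{ρ,s} mapping H₊^{ρ,s} bijectively onto H₊^{ρ,s+1}, it equals the convergent Neumann series R(κ,u) = R₀(κ) Σ_{j≥0} (−1)^j [T_u R₀(κ)]^j in B(H₊^{ρ,s}), and its operator norm satisfies ‖R(κ,u)‖ ≤ 1/(κ − C_s ‖u‖_{ρ,s}). -/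

import Mathlib

/-!
Common framework: we model periodic functions on the torus 𝕋 = ℝ/2πℤ by their
sequences of Fourier coefficients `u : ℤ → ℂ`.  Products of functions become
convolutions of coefficients, the analytic Sobolev norm is an exponentially
weighted ℓ²-sum, and the Hardy space L²₊ is modelled as `lp`-space over the
positive integer frequencies.
-/

noncomputable section
open Filter Set
open scoped BigOperators Topology

namespace BO

/-- Japanese bracket `⟨n⟩ = (1+n²)^{1/2}`. -/
def jb (n : ℤ) : ℝ := Real.sqrt (1 + (n : ℝ) ^ 2)

/-- The weight `⟨n⟩^s e^{ρ|n|}` of the analytic Sobolev space `H^{ρ,s}`. -/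
def wt (ρ s : ℝ) (n : ℤ) : ℝ := jb n ^ s * Real.exp (ρ * |(n : ℝ)|)

/-- Membership in `H^{ρ,s}` (for the Fourier coefficients `u`). -/
def MemH (ρ s : ℝ) (u : ℤ → ℂ) : Prop :=
  Summable fun n : ℤ => wt ρ s n ^ 2 * ‖u n‖ ^ 2

/-- The analytic Sobolev norm `‖u‖_{ρ,s}`. -/
def anorm (ρ s : ℝ) (u : ℤ → ℂ) : ℝ :=
  Real.sqrt (∑' n : ℤ, wt ρ s n ^ 2 * ‖u n‖ ^ 2)

/-- The (normalized) `L²` norm. -/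
def l2norm (u : ℤ → ℂ) : ℝ := Real.sqrt (∑' n : ℤ, ‖u n‖ ^ 2)

/-- `u` is the coefficient sequence of a real-valued function. -/
def IsReal (u : ℤ → ℂ) : Prop := ∀ n : ℤ, u (-n) = (starRingEnd ℂ) (u n)

/-- Fourier coefficients of the pointwise product (= convolution). -/
def fmul (u v : ℤ → ℂ) : ℤ → ℂ := fun n => ∑' m : ℤ, u (n - m) * v m

/-- Projection onto positive frequencies, `C₊`. -/
def Cplus (u : ℤ → ℂ) : ℤ → ℂ := fun n => if 0 < n then u n else 0

/-- Projection onto negative frequencies, `C₋`. -/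
def Cminus (u : ℤ → ℂ) : ℤ → ℂ := fun n => if n < 0 then u n else 0

/-- Projection onto the zero mode (spatial mean), `P₀`. -/
def P0 (u : ℤ → ℂ) : ℤ → ℂ := fun n => if n = 0 then u 0 else 0

/-- Membership in the positive-frequency space `H₊^{ρ,s}`. -/
def MemHplus (ρ s : ℝ) (u : ℤ → ℂ) : Prop :=
  MemH ρ s u ∧ ∀ n : ℤ, n ≤ 0 → u n = 0

/-- Coefficients of the constant function `1`. -/
def delta0 : ℤ → ℂ := fun n => if n = 0 then 1 else 0

/-- Spatial derivative `∂ₓ` (multiplier `i n`). -/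
def dx (u : ℤ → ℂ) : ℤ → ℂ := fun n => Complex.I * (n : ℂ) * u n

/-- Coefficients of the complex conjugate function. -/
def conjFun (u : ℤ → ℂ) : ℤ → ℂ := fun n => (starRingEnd ℂ) (u (-n))

/-- The Toeplitz operator `T_u f = C₊(uf)`. -/
def Toep (u f : ℤ → ℂ) : ℤ → ℂ := Cplus (fmul u f)

/-- The Lax operator `L_u f = -2i∂ₓ f + C₊(uf)` (multiplier `2n` plus Toeplitz). -/
def LaxOp (u f : ℤ → ℂ) : ℤ → ℂ := fun n => 2 * (n : ℂ) * f n + Toep u f n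

/-- The free resolvent `R₀(κ) = (L₀+κ)⁻¹` on positive frequencies. -/
def R0 (κ : ℝ) (u : ℤ → ℂ) : ℤ → ℂ :=
  fun n => if 0 < n then (2 * (n : ℂ) + (κ : ℂ))⁻¹ * u n else 0

/-- The algebra constant `C_s = 2^{s+1} (Σ_k ⟨k⟩^{-2s})^{1/2}` of `H^{ρ,s}`. -/
def Cs (s : ℝ) : ℝ := (2 : ℝ) ^ (s + 1) * Real.sqrt (∑' k : ℤ, jb k ^ (-(2 * s)))

/-- Positive integer frequencies. -/
abbrev PosZ := {n : ℤ // 0 < n}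

/-- The Hardy space `L²₊(𝕋)` in Fourier coordinates. -/
abbrev Hardy := lp (fun _ : PosZ => ℂ) 2

/-- The `H¹₊` subset of the Hardy space. -/
def H1set : Set Hardy := {f | Summable fun n : PosZ => (1 + ((n : ℤ) : ℝ) ^ 2) * ‖f n‖ ^ 2}

/-- `L²` norm of a positive-frequency coefficient sequence. -/
def l2p (f : PosZ → ℂ) : ℝ := Real.sqrt (∑' n : PosZ, ‖f n‖ ^ 2)

/-- Action of the Lax operator `L_v` on positive-frequency coefficients. -/
def laxC (v : ℤ → ℂ) (f : PosZ → ℂ) : PosZ → ℂ :=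
  fun n => 2 * ((n : ℤ) : ℂ) * f n + ∑' m : PosZ, v ((n : ℤ) - (m : ℤ)) * f m

/-- Exponentially shifted symbol: `(eshift σ v)(k) = e^{σ k} v(k)`. -/
def eshift (σ : ℝ) (v : ℤ → ℂ) : ℤ → ℂ := fun k => (Real.exp (σ * (k : ℝ)) : ℂ) * v k

/-- `ψ = e^{(ρ/2)L_v} v₊`, characterized by the backward flow
`φ(τ) = e^{(ρ/2-τ)L_v} v₊`: a strongly `C¹` curve in `H¹₊ ⊂ L²₊` with
`φ' = -L_v φ`, `φ(0) = ψ` and `φ(ρ/2) = v₊`. -/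
def IsSpecState (ρ : ℝ) (v : ℤ → ℂ) (ψ : PosZ → ℂ) : Prop :=
  ∃ φ : ℝ → PosZ → ℂ,
    φ 0 = ψ ∧
    (∀ n : PosZ, φ (ρ / 2) n = v (n : ℤ)) ∧
    (∀ τ ∈ Set.Icc (0 : ℝ) (ρ / 2),
      Summable fun n : PosZ => (1 + ((n : ℤ) : ℝ) ^ 2) * ‖φ τ n‖ ^ 2) ∧
    (∀ τ ∈ Set.Icc (0 : ℝ) (ρ / 2),
      Filter.Tendsto
        (fun τ' : ℝ =>
          l2p (fun n => φ τ' n - φ τ n + ((τ' - τ : ℝ) : ℂ) * laxC v (φ τ) n) / |τ' - τ|)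
        (nhdsWithin τ (Set.Icc (0 : ℝ) (ρ / 2) \ {τ})) (nhds 0))

/-- The exponential spectral energy `E_ρ(v) = ‖ψ_v‖² + ‖(1/2)L_v ψ_v‖²`
expressed through the state `ψ = e^{(ρ/2)L_v}v₊`. -/
def Erho (v : ℤ → ℂ) (ψ : PosZ → ℂ) : ℝ :=
  (∑' n : PosZ, ‖ψ n‖ ^ 2) + (1 / 4) * ∑' n : PosZ, ‖laxC v ψ n‖ ^ 2

/-- The geometric constant `c₁ = (1/2)(π²/6 - (π coth π - 1)/2)^{1/2}`. -/
def c1const : ℝ :=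
  (1 / 2) * Real.sqrt (Real.pi ^ 2 / 6 -
    (Real.pi * (Real.cosh Real.pi / Real.sinh Real.pi) - 1) / 2)

/-- The geometric constant `c₂ = (π coth π - 1)^{1/2}`. -/
def c2const : ℝ :=
  Real.sqrt (Real.pi * (Real.cosh Real.pi / Real.sinh Real.pi) - 1)

/-- The geometric bounding function `f(x) = (1/√2) e^{-c₁x}(x - (√2/2)c₂x²)`. -/
def fbar (c₁ c₂ x : ℝ) : ℝ :=
  (1 / Real.sqrt 2) * Real.exp (-c₁ * x) * (x - (Real.sqrt 2 / 2) * c₂ * x ^ 2)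

/-- `m` is the resolvent gauge variable `m(κ,u) = (L_u+κ)⁻¹ u₊`:
the unique positive-frequency `ℓ²` solution of `(L_u+κ)m = u₊`. -/
def IsGauge (κ : ℝ) (u m : ℤ → ℂ) : Prop :=
  (∀ n : ℤ, n ≤ 0 → m n = 0) ∧ (Summable fun n : ℤ => ‖m n‖ ^ 2) ∧
  ∀ n : ℤ, LaxOp u m n + (κ : ℂ) * m n = Cplus u n

-- The gauge variable, selected by choice (it is unique for `κ` large).
open scoped Classical in
def gauge (κ : ℝ) (u : ℤ → ℂ) : ℤ → ℂ :=
  if h : ∃ m : ℤ → ℂ, IsGauge κ u m then h.choose else 0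

/-- The spectral generating functional `β(κ;u) = ⟨u₊, m(κ,u)⟩_{L²}`. -/
def beta (κ : ℝ) (u : ℤ → ℂ) : ℂ :=
  ∑' n : ℤ, Cplus u n * (starRingEnd ℂ) (gauge κ u n)

/-- Right-hand side of the Benjamin–Ono equation,
`∂ₜ u = -H∂ₓₓu - u∂ₓu` (the multiplier of `H∂ₓₓ` is `i n |n|`). -/
def BOrhs (u : ℤ → ℂ) : ℤ → ℂ :=
  fun n => -(Complex.I * (n : ℂ) * ((|n| : ℤ) : ℂ) * u n) - fmul u (dx u) n

/-- `u` is a global solution of the regularized `H_κ` flow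
`∂ₜu = -(κ/2)∂ₓu + (κ²/2)∂ₓ(m + m̄ - |m|²)` with data `u₀`,
continuous in time with values in `H₀^{ρ,1}`. -/
def IsHkFlow (ρ κ : ℝ) (u₀ : ℤ → ℂ) (u : ℝ → ℤ → ℂ) : Prop :=
  u 0 = u₀ ∧
  (∀ t : ℝ, MemH ρ 1 (u t) ∧ u t 0 = 0 ∧ IsReal (u t)) ∧
  (∀ t₀ : ℝ, Filter.Tendsto (fun t => anorm ρ 1 (fun n => u t n - u t₀ n))
      (nhds t₀) (nhds 0)) ∧
  (∀ t : ℝ, ∃ m : ℤ → ℂ, IsGauge κ (u t) m ∧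
    ∀ n : ℤ, HasDerivAt (fun t' => u t' n)
      (-((κ : ℂ) / 2) * (Complex.I * (n : ℂ) * u t n) +
        ((κ : ℂ) ^ 2 / 2) * (Complex.I * (n : ℂ) *
          (m n + conjFun m n - fmul m (conjFun m) n))) t)

/-- `u` is a global classical solution of the Benjamin–Ono equation with data `u₀`:
for every `T > 0` and `ε ∈ (0,ρ/6)` it lies in
`C¹([-T,T]; H₀^{ρ-3ε,1}) ∩ C([-T,T]; H₀^{ρ-ε,1})` and satisfies
`∂ₜu = -H∂ₓₓu - u∂ₓu` (time derivative in `H₀^{ρ-3ε,1}`). -/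
def IsBOSol (ρ : ℝ) (u₀ : ℤ → ℂ) (u : ℝ → ℤ → ℂ) : Prop :=
  u 0 = u₀ ∧
  (∀ t : ℝ, u t 0 = 0 ∧ IsReal (u t)) ∧
  ∀ T > (0 : ℝ), ∀ ε ∈ Set.Ioo (0 : ℝ) (ρ / 6),
    (∀ t ∈ Set.Icc (-T) T, MemH (ρ - ε) 1 (u t)) ∧
    (∀ t₀ ∈ Set.Icc (-T) T,
      Filter.Tendsto (fun t => anorm (ρ - ε) 1 (fun n => u t n - u t₀ n))
        (nhdsWithin t₀ (Set.Icc (-T) T)) (nhds 0)) ∧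
    (∀ t₀ ∈ Set.Icc (-T) T, MemH (ρ - 3 * ε) 1 (BOrhs (u t₀)) ∧
      Filter.Tendsto (fun t =>
          anorm (ρ - 3 * ε) 1
            (fun n => u t n - u t₀ n - ((t - t₀ : ℝ) : ℂ) * BOrhs (u t₀) n) / |t - t₀|)
        (nhdsWithin t₀ (Set.Icc (-T) T \ {t₀})) (nhds 0)) ∧
    (∀ t₀ ∈ Set.Icc (-T) T,
      Filter.Tendsto (fun t => anorm (ρ - 3 * ε) 1 (fun n => BOrhs (u t) n - BOrhs (u t₀) n))
        (nhdsWithin t₀ (Set.Icc (-T) T)) (nhds 0))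



-- Chunk 1: basic weight lemmas and summation toolkit

lemma jb_pos (n : ℤ) : 0 < jb n := Real.sqrt_pos.2 (by positivity)

lemma jb_sq (n : ℤ) : jb n ^ 2 = 1 + (n : ℝ) ^ 2 :=
  Real.sq_sqrt (by positivity)

lemma one_le_jb (n : ℤ) : 1 ≤ jb n := by
  have h : Real.sqrt 1 ≤ Real.sqrt (1 + (n:ℝ)^2) :=
    Real.sqrt_le_sqrt (by nlinarith [sq_nonneg ((n:ℝ))])
  simpa [jb, Real.sqrt_one] using h

lemma abs_le_jb (n : ℤ) : |(n : ℝ)| ≤ jb n := by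
  rw [jb, show |(n:ℝ)| = Real.sqrt ((n:ℝ)^2) from (Real.sqrt_sq_eq_abs _).symm]
  exact Real.sqrt_le_sqrt (by nlinarith)

lemma jb_add (a b : ℤ) : jb (a + b) ≤ jb a + jb b := by
  have hP := Real.sq_sqrt (show (0:ℝ) ≤ 1 + (a:ℝ)^2 by positivity)
  have hQ := Real.sq_sqrt (show (0:ℝ) ≤ 1 + (b:ℝ)^2 by positivity)
  have hP0 := Real.sqrt_nonneg (1 + (a:ℝ)^2)
  have hQ0 := Real.sqrt_nonneg (1 + (b:ℝ)^2)
  have key : 1 + ((a:ℝ) + (b:ℝ))^2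
      ≤ (Real.sqrt (1+(a:ℝ)^2) + Real.sqrt (1+(b:ℝ)^2))^2 := by
    have hPQ : (1 + (a:ℝ)*(b:ℝ)) ≤ Real.sqrt (1+(a:ℝ)^2) * Real.sqrt (1+(b:ℝ)^2) := by
      rcases le_or_gt (1 + (a:ℝ)*(b:ℝ)) 0 with h|h
      · exact h.trans (by positivity)
      · nlinarith [sq_nonneg ((a:ℝ) - (b:ℝ)), mul_nonneg hP0 hQ0]
    nlinarith
  have h2 := Real.sqrt_le_sqrt key
  rw [Real.sqrt_sq (by positivity)] at h2
  simpa [jb] using h2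

lemma wt_pos (ρ s : ℝ) (n : ℤ) : 0 < wt ρ s n :=
  mul_pos (Real.rpow_pos_of_pos (jb_pos n) s) (Real.exp_pos _)

lemma one_le_wt {ρ s : ℝ} (hρ : 0 ≤ ρ) (hs : 0 ≤ s) (n : ℤ) : 1 ≤ wt ρ s n := by
  have h1 : (1:ℝ) ≤ jb n ^ s := by
    have := Real.rpow_le_rpow_of_exponent_le (one_le_jb n) hs
    simpa [Real.rpow_zero] using
      Real.rpow_le_rpow_of_exponent_le (one_le_jb n) hs
  have h2 : (1:ℝ) ≤ Real.exp (ρ * |(n:ℝ)|) :=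
    Real.one_le_exp (by positivity)
  calc (1:ℝ) = 1 * 1 := by ring
  _ ≤ jb n ^ s * Real.exp (ρ * |(n:ℝ)|) :=
      mul_le_mul h1 h2 (by norm_num) (by positivity)

/-- Subadditivity of `x ↦ x^s` up to the factor `2^s`. -/
lemma rpow_add_le {x y s : ℝ} (hx : 0 ≤ x) (hy : 0 ≤ y) (hs : 0 ≤ s) :
    (x + y) ^ s ≤ 2 ^ s * (x ^ s + y ^ s) := by
  have hmax : x + y ≤ 2 * max x y := by
    rcases le_total x y with h|h
    · simp [max_eq_right h]; linarith
    · simp [max_eq_left h]; linarith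
  calc (x + y) ^ s ≤ (2 * max x y) ^ s :=
        Real.rpow_le_rpow (by positivity) hmax hs
  _ = 2 ^ s * (max x y) ^ s := Real.mul_rpow (by norm_num) (le_max_iff.2 (Or.inl hx))
  _ ≤ 2 ^ s * (x ^ s + y ^ s) := by
      gcongr 2 ^ s * ?_
      rcases le_total x y with h|h
      · rw [max_eq_right h]
        exact le_add_of_nonneg_left (Real.rpow_nonneg hx s)
      · rw [max_eq_left h]
        exact le_add_of_nonneg_right (Real.rpow_nonneg hy s)

/-- Key convolution inequality for the weight. -/
lemma wt_conv {ρ s : ℝ} (hρ : 0 ≤ ρ) (hs : 0 ≤ s) (n m : ℤ) :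
    wt ρ s n ≤ 2 ^ s * (wt ρ s (n - m) * Real.exp (ρ * |((m:ℤ):ℝ)|)
      + Real.exp (ρ * |((n - m : ℤ):ℝ)|) * wt ρ s m) := by
  have hjb : jb n ≤ jb (n - m) + jb m := by
    have := jb_add (n - m) m
    simpa using this
  have hpow : jb n ^ s ≤ 2 ^ s * (jb (n - m) ^ s + jb m ^ s) := by
    calc jb n ^ s ≤ (jb (n - m) + jb m) ^ s :=
          Real.rpow_le_rpow (jb_pos n).le hjb hs
    _ ≤ 2 ^ s * (jb (n - m) ^ s + jb m ^ s) :=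
          rpow_add_le (jb_pos _).le (jb_pos _).le hs
  have hexp : Real.exp (ρ * |(n:ℝ)|)
      ≤ Real.exp (ρ * |((n - m : ℤ):ℝ)|) * Real.exp (ρ * |((m:ℤ):ℝ)|) := by
    rw [← Real.exp_add]
    apply Real.exp_le_exp.2
    have habs : |(n:ℝ)| ≤ |((n-m : ℤ):ℝ)| + |((m:ℤ):ℝ)| := by
      push_cast
      calc |(n:ℝ)| = |((n:ℝ) - m) + m| := by ring_nf
      _ ≤ |(n:ℝ) - m| + |(m:ℝ)| := abs_add_le _ _
    nlinarith [abs_nonneg ((n:ℝ)), hρ]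
  have h1 : wt ρ s n = jb n ^ s * Real.exp (ρ * |(n:ℝ)|) := rfl
  have e1 : (0:ℝ) ≤ Real.exp (ρ * |(n:ℝ)|) := (Real.exp_pos _).le
  calc wt ρ s n = jb n ^ s * Real.exp (ρ * |(n:ℝ)|) := rfl
  _ ≤ (2 ^ s * (jb (n - m) ^ s + jb m ^ s)) *
        (Real.exp (ρ * |((n - m : ℤ):ℝ)|) * Real.exp (ρ * |((m:ℤ):ℝ)|)) := by
      apply mul_le_mul hpow hexp e1
      exact mul_nonneg (by positivity)
        (add_nonneg (Real.rpow_nonneg (jb_pos _).le _) (Real.rpow_nonneg (jb_pos _).le _))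
  _ = 2 ^ s * (wt ρ s (n - m) * Real.exp (ρ * |((m:ℤ):ℝ)|)
      + Real.exp (ρ * |((n - m : ℤ):ℝ)|) * wt ρ s m) := by
      simp only [wt]; ring

/-- Cauchy–Schwarz for infinite sums of nonnegative reals. -/
lemma tsum_CS {ι : Type*} (a b : ι → ℝ) (ha0 : ∀ i, 0 ≤ a i) (hb0 : ∀ i, 0 ≤ b i)
    (ha : Summable fun i => a i ^ 2) (hb : Summable fun i => b i ^ 2) :
    Summable (fun i => a i * b i) ∧
      ∑' i, a i * b i ≤ Real.sqrt (∑' i, a i ^ 2) * Real.sqrt (∑' i, b i ^ 2) := by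
  have hsum : Summable (fun i => a i * b i) := by
    apply Summable.of_nonneg_of_le (fun i => mul_nonneg (ha0 i) (hb0 i))
      (fun i => ?_) ((ha.add hb).div_const 2)
    nlinarith [sq_nonneg (a i - b i)]
  refine ⟨hsum, Summable.tsum_le_of_sum_le hsum fun F => ?_⟩
  have h1 : (∑ i ∈ F, a i * b i)^2 ≤ (∑ i ∈ F, a i ^ 2) * (∑ i ∈ F, b i ^ 2) :=
    Finset.sum_mul_sq_le_sq_mul_sq F a b
  have h2 : ∑ i ∈ F, a i ^ 2 ≤ ∑' i, a i ^ 2 :=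
    Summable.sum_le_tsum F (fun i _ => sq_nonneg _) ha
  have h3 : ∑ i ∈ F, b i ^ 2 ≤ ∑' i, b i ^ 2 :=
    Summable.sum_le_tsum F (fun i _ => sq_nonneg _) hb
  have h4 : (0:ℝ) ≤ ∑ i ∈ F, a i * b i :=
    Finset.sum_nonneg fun i _ => mul_nonneg (ha0 i) (hb0 i)
  have h5 : ∑ i ∈ F, a i * b i ≤ Real.sqrt ((∑ i ∈ F, a i ^ 2) * (∑ i ∈ F, b i ^ 2)) := by
    rw [show (∑ i ∈ F, a i * b i) = Real.sqrt ((∑ i ∈ F, a i * b i)^2) from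
      (Real.sqrt_sq h4).symm]
    exact Real.sqrt_le_sqrt h1
  calc ∑ i ∈ F, a i * b i
      ≤ Real.sqrt ((∑ i ∈ F, a i ^ 2) * (∑ i ∈ F, b i ^ 2)) := h5
  _ = Real.sqrt (∑ i ∈ F, a i ^ 2) * Real.sqrt (∑ i ∈ F, b i ^ 2) := by
      rw [Real.sqrt_mul (Finset.sum_nonneg fun i _ => sq_nonneg _)]
  _ ≤ Real.sqrt (∑' i, a i ^ 2) * Real.sqrt (∑' i, b i ^ 2) := by
      exact mul_le_mul (Real.sqrt_le_sqrt h2) (Real.sqrt_le_sqrt h3)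
        (Real.sqrt_nonneg _) (Real.sqrt_nonneg _)

-- Chunk 2: MemH / anorm toolkit

lemma memH_iff {ρ s : ℝ} {v : ℤ → ℂ} :
    MemH ρ s v ↔ Summable (fun n => (wt ρ s n * ‖v n‖) ^ 2) := by
  simp only [MemH, mul_pow]

lemma anorm_eq {ρ s : ℝ} (v : ℤ → ℂ) :
    anorm ρ s v = Real.sqrt (∑' n, (wt ρ s n * ‖v n‖) ^ 2) := by
  simp only [anorm, mul_pow]

lemma anorm_nonneg (ρ s : ℝ) (v : ℤ → ℂ) : 0 ≤ anorm ρ s v := Real.sqrt_nonneg _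

lemma anorm_sq {ρ s : ℝ} {v : ℤ → ℂ} (hv : MemH ρ s v) :
    anorm ρ s v ^ 2 = ∑' n, (wt ρ s n * ‖v n‖) ^ 2 := by
  rw [anorm_eq]
  exact Real.sq_sqrt (tsum_nonneg fun n => sq_nonneg _)

lemma weighted_le_anorm {ρ s : ℝ} {v : ℤ → ℂ} (hv : MemH ρ s v) (n : ℤ) :
    wt ρ s n * ‖v n‖ ≤ anorm ρ s v := by
  rw [anorm_eq]
  have h := Summable.le_tsum (memH_iff.1 hv) n (fun m _ => sq_nonneg _)
  have h0 : 0 ≤ wt ρ s n * ‖v n‖ := mul_nonneg (wt_pos ρ s n).le (norm_nonneg _)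
  rw [show wt ρ s n * ‖v n‖ = Real.sqrt ((wt ρ s n * ‖v n‖)^2) from (Real.sqrt_sq h0).symm]
  exact Real.sqrt_le_sqrt h

/-- Domination lemma. -/
lemma anorm_dom {ρ s ρ' s' : ℝ} {v w : ℤ → ℂ} {c : ℝ} (hc : 0 ≤ c)
    (hdom : ∀ n, wt ρ s n * ‖v n‖ ≤ c * (wt ρ' s' n * ‖w n‖))
    (hw : MemH ρ' s' w) : MemH ρ s v ∧ anorm ρ s v ≤ c * anorm ρ' s' w := by
  have hsq : ∀ n, (wt ρ s n * ‖v n‖)^2 ≤ c^2 * (wt ρ' s' n * ‖w n‖)^2 := by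
    intro n
    have h0 : 0 ≤ wt ρ s n * ‖v n‖ := mul_nonneg (wt_pos ρ s n).le (norm_nonneg _)
    calc (wt ρ s n * ‖v n‖)^2 ≤ (c * (wt ρ' s' n * ‖w n‖))^2 := by
          apply sq_le_sq' _ (hdom n); linarith [hdom n]
    _ = c^2 * (wt ρ' s' n * ‖w n‖)^2 := by ring
  have hmem : MemH ρ s v := by
    rw [memH_iff]
    exact Summable.of_nonneg_of_le (fun n => sq_nonneg _) hsq
      ((memH_iff.1 hw).mul_left (c^2))
  refine ⟨hmem, ?_⟩
  rw [anorm_eq, anorm_eq]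
  have h1 : ∑' n, (wt ρ s n * ‖v n‖)^2 ≤ c^2 * ∑' n, (wt ρ' s' n * ‖w n‖)^2 := by
    rw [← tsum_mul_left]
    exact Summable.tsum_le_tsum hsq (memH_iff.1 hmem) ((memH_iff.1 hw).mul_left (c^2))
  calc Real.sqrt (∑' n, (wt ρ s n * ‖v n‖)^2)
      ≤ Real.sqrt (c^2 * ∑' n, (wt ρ' s' n * ‖w n‖)^2) := Real.sqrt_le_sqrt h1
  _ = c * Real.sqrt (∑' n, (wt ρ' s' n * ‖w n‖)^2) := by
      rw [Real.sqrt_mul (sq_nonneg c), Real.sqrt_sq hc]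

lemma anorm_eq_zero {ρ s : ℝ} {v : ℤ → ℂ} (hv : MemH ρ s v)
    (h : anorm ρ s v = 0) : ∀ n, v n = 0 := by
  intro n
  have h1 := weighted_le_anorm hv n
  rw [h] at h1
  have h2 : 0 ≤ ‖v n‖ := norm_nonneg _
  have h3 := (wt_pos ρ s n)
  have : ‖v n‖ = 0 := by nlinarith
  simpa using this

/-- ℓ²-triangle inequality for nonnegative real sequences. -/
lemma l2tri {p q : ℤ → ℝ} (hp0 : ∀ n, 0 ≤ p n) (hq0 : ∀ n, 0 ≤ q n)
    (hp : Summable fun n => p n ^ 2) (hq : Summable fun n => q n ^ 2) :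
    Summable (fun n => (p n + q n) ^ 2) ∧
      Real.sqrt (∑' n, (p n + q n) ^ 2)
        ≤ Real.sqrt (∑' n, p n ^ 2) + Real.sqrt (∑' n, q n ^ 2) := by
  obtain ⟨hpq, hCS⟩ := tsum_CS p q hp0 hq0 hp hq
  have hexp : ∀ n, (p n + q n)^2 = p n ^2 + 2 * (p n * q n) + q n ^2 := fun n => by ring
  have hsum : Summable (fun n => (p n + q n)^2) := by
    simp only [hexp]
    exact (hp.add (hpq.mul_left 2)).add hq
  refine ⟨hsum, ?_⟩
  have ht : ∑' n, (p n + q n)^2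
      = (∑' n, p n ^2) + 2 * (∑' n, p n * q n) + ∑' n, q n ^2 := by
    simp only [hexp]
    rw [Summable.tsum_add (hp.add (hpq.mul_left 2)) hq, Summable.tsum_add hp (hpq.mul_left 2),
      tsum_mul_left]
  have hP := Real.sq_sqrt (tsum_nonneg (fun n => sq_nonneg (p n)) : (0:ℝ) ≤ ∑' n, p n ^ 2)
  have hQ := Real.sq_sqrt (tsum_nonneg (fun n => sq_nonneg (q n)) : (0:ℝ) ≤ ∑' n, q n ^ 2)
  have key : ∑' n, (p n + q n)^2
      ≤ (Real.sqrt (∑' n, p n ^2) + Real.sqrt (∑' n, q n ^2))^2 := by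
    rw [ht]; nlinarith [Real.sqrt_nonneg (∑' n, p n ^2), Real.sqrt_nonneg (∑' n, q n ^2)]
  have := Real.sqrt_le_sqrt key
  rwa [Real.sqrt_sq (by positivity)] at this

/-- Triangle inequality for `anorm`. -/
lemma anorm_add {ρ s : ℝ} {v w : ℤ → ℂ} (hv : MemH ρ s v) (hw : MemH ρ s w) :
    MemH ρ s (fun n => v n + w n) ∧
      anorm ρ s (fun n => v n + w n) ≤ anorm ρ s v + anorm ρ s w := by
  set p : ℤ → ℝ := fun n => wt ρ s n * ‖v n‖ with hp
  set q : ℤ → ℝ := fun n => wt ρ s n * ‖w n‖ with hq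
  have hp0 : ∀ n, 0 ≤ p n := fun n => mul_nonneg (wt_pos ρ s n).le (norm_nonneg _)
  have hq0 : ∀ n, 0 ≤ q n := fun n => mul_nonneg (wt_pos ρ s n).le (norm_nonneg _)
  obtain ⟨hsum, htri⟩ := l2tri hp0 hq0 (memH_iff.1 hv) (memH_iff.1 hw)
  have hdom : ∀ n, (wt ρ s n * ‖v n + w n‖)^2 ≤ (p n + q n)^2 := by
    intro n
    have h1 : wt ρ s n * ‖v n + w n‖ ≤ p n + q n := by
      rw [hp, hq]
      calc wt ρ s n * ‖v n + w n‖ ≤ wt ρ s n * (‖v n‖ + ‖w n‖) := by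
            apply mul_le_mul_of_nonneg_left (norm_add_le _ _) (wt_pos ρ s n).le
      _ = wt ρ s n * ‖v n‖ + wt ρ s n * ‖w n‖ := by ring
    have h0 : 0 ≤ wt ρ s n * ‖v n + w n‖ := mul_nonneg (wt_pos ρ s n).le (norm_nonneg _)
    nlinarith
  have hmem : MemH ρ s (fun n => v n + w n) := by
    rw [memH_iff]
    exact Summable.of_nonneg_of_le (fun n => sq_nonneg _) hdom hsum
  refine ⟨hmem, ?_⟩
  rw [anorm_eq, anorm_eq, anorm_eq]
  calc Real.sqrt (∑' n, (wt ρ s n * ‖v n + w n‖)^2)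
      ≤ Real.sqrt (∑' n, (p n + q n)^2) :=
        Real.sqrt_le_sqrt (Summable.tsum_le_tsum hdom (memH_iff.1 hmem) hsum)
  _ ≤ _ := htri

lemma memH_zero (ρ s : ℝ) : MemH ρ s (fun _ => (0:ℂ)) := by
  rw [memH_iff]; simpa using summable_zero

lemma anorm_zero (ρ s : ℝ) : anorm ρ s (fun _ => (0:ℂ)) = 0 := by
  rw [anorm_eq]; simp

lemma anorm_congr {ρ s : ℝ} {v w : ℤ → ℂ} (h : ∀ n, v n = w n) :
    anorm ρ s v = anorm ρ s w := by
  have : v = w := funext h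
  rw [this]

-- Chunk 3: infinite Minkowski inequality

lemma anorm_tsum_le {ρ s : ℝ} (hρ : 0 ≤ ρ) (hs : 0 ≤ s) (c : ℕ → ℤ → ℂ) (bnd : ℕ → ℝ)
    (hmem : ∀ j, MemH ρ s (c j)) (hle : ∀ j, anorm ρ s (c j) ≤ bnd j)
    (hbnd : Summable bnd) :
    (∀ n, Summable fun j => c j n) ∧ MemH ρ s (fun n => ∑' j, c j n) ∧
      anorm ρ s (fun n => ∑' j, c j n) ≤ ∑' j, bnd j := by
  have hb0 : ∀ j, 0 ≤ bnd j := fun j => (anorm_nonneg ρ s (c j)).trans (hle j)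
  -- pointwise absolute summability
  have hpt : ∀ n, Summable fun j => ‖c j n‖ := by
    intro n
    apply Summable.of_nonneg_of_le (fun j => norm_nonneg _)
      (fun j => ?_) (hbnd.mul_left (wt ρ s n)⁻¹)
    have h1 := (weighted_le_anorm (hmem j) n).trans (hle j)
    have h2 := wt_pos ρ s n
    rw [inv_mul_eq_div, le_div_iff₀ h2]
    linarith [h1]
  have hptsum : ∀ n, Summable fun j => c j n := fun n => (hpt n).of_norm
  set h : ℤ → ℂ := fun n => ∑' j, c j n with hh
  set B : ℝ := ∑' j, bnd j with hB
  have hB0 : 0 ≤ B := tsum_nonneg hb0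
  -- finite partial sums satisfy the Minkowski bound
  have hfin : ∀ N : ℕ, MemH ρ s (fun n => ∑ j ∈ Finset.range N, c j n) ∧
      anorm ρ s (fun n => ∑ j ∈ Finset.range N, c j n) ≤ ∑ j ∈ Finset.range N, bnd j := by
    intro N
    induction N with
    | zero => simpa using ⟨memH_zero ρ s, le_of_eq (anorm_zero ρ s)⟩
    | succ N ih =>
      have he : ∀ n, ∑ j ∈ Finset.range (N+1), c j n
          = (∑ j ∈ Finset.range N, c j n) + c N n := by
        intro n; rw [Finset.sum_range_succ]
      obtain ⟨hm, ha⟩ := anorm_add ih.1 (hmem N)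
      constructor
      · rw [memH_iff] at hm ⊢
        simpa only [he] using hm
      · rw [anorm_congr he, Finset.sum_range_succ]
        exact ha.trans (add_le_add ih.2 (hle N))
  -- limit bound on finite sets of frequencies
  have hE : ∀ E : Finset ℤ, ∑ n ∈ E, (wt ρ s n * ‖h n‖)^2 ≤ B^2 := by
    intro E
    have htend : Filter.Tendsto
        (fun N => ∑ n ∈ E, (wt ρ s n * ‖∑ j ∈ Finset.range N, c j n‖)^2)
        Filter.atTop (nhds (∑ n ∈ E, (wt ρ s n * ‖h n‖)^2)) := by
      apply tendsto_finset_sum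
      intro n _
      have h1 : Filter.Tendsto (fun N => ∑ j ∈ Finset.range N, c j n)
          Filter.atTop (nhds (h n)) := (hptsum n).hasSum.tendsto_sum_nat
      exact ((h1.norm.const_mul (wt ρ s n)).pow 2)
    apply le_of_tendsto htend
    apply Filter.Eventually.of_forall
    intro N
    obtain ⟨hm, ha⟩ := hfin N
    have h1 : ∑ n ∈ E, (wt ρ s n * ‖∑ j ∈ Finset.range N, c j n‖)^2
        ≤ ∑' n, (wt ρ s n * ‖∑ j ∈ Finset.range N, c j n‖)^2 :=
      Summable.sum_le_tsum E (fun n _ => sq_nonneg _) (memH_iff.1 hm)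
    have h2 : ∑' n, (wt ρ s n * ‖∑ j ∈ Finset.range N, c j n‖)^2
        = anorm ρ s (fun n => ∑ j ∈ Finset.range N, c j n)^2 := (anorm_sq hm).symm
    have h3 : anorm ρ s (fun n => ∑ j ∈ Finset.range N, c j n) ≤ B :=
      ha.trans (Summable.sum_le_tsum _ (fun j _ => hb0 j) hbnd)
    calc ∑ n ∈ E, (wt ρ s n * ‖∑ j ∈ Finset.range N, c j n‖)^2
        ≤ anorm ρ s (fun n => ∑ j ∈ Finset.range N, c j n)^2 := h2 ▸ h1
    _ ≤ B^2 := by nlinarith [anorm_nonneg ρ s (fun n => ∑ j ∈ Finset.range N, c j n)]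
  have hmemh : MemH ρ s h := by
    rw [memH_iff]
    exact summable_of_sum_le (fun n => sq_nonneg _) hE
  refine ⟨hptsum, hmemh, ?_⟩
  rw [anorm_eq]
  have h4 : ∑' n, (wt ρ s n * ‖h n‖)^2 ≤ B^2 :=
    Summable.tsum_le_of_sum_le (memH_iff.1 hmemh) hE
  calc Real.sqrt (∑' n, (wt ρ s n * ‖h n‖)^2) ≤ Real.sqrt (B^2) := Real.sqrt_le_sqrt h4
  _ = B := Real.sqrt_sq hB0

-- Chunk 4: summability of the weight, Young's inequality

lemma sumInvNat : Summable (fun k : ℕ => ((1:ℝ) + (k:ℝ)^2)⁻¹) := by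
  have hbase : Summable (fun k : ℕ => (1:ℝ) / ((k:ℝ)+1)^2) := by
    have h := (summable_nat_add_iff 1).2
      ((Real.summable_one_div_nat_pow (p := 2)).2 one_lt_two)
    apply h.congr
    intro k; push_cast; ring
  apply Summable.of_nonneg_of_le (fun k => by positivity) (fun k => ?_) (hbase.mul_left 2)
  have h1 : ((k:ℝ)+1)^2 ≤ 2 * (1 + (k:ℝ)^2) := by nlinarith [sq_nonneg ((k:ℝ) - 1)]
  have h2 : (0:ℝ) < ((k:ℝ)+1)^2 := by positivity
  have h3 : (0:ℝ) < 1 + (k:ℝ)^2 := by positivity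
  rw [div_eq_mul_inv] at *
  rw [inv_le_iff_one_le_mul₀ h3]
  calc (1:ℝ) = ((k:ℝ)+1)^2 * (((k:ℝ)+1)^2)⁻¹ := by field_simp
  _ ≤ (2 * (1 + (k:ℝ)^2)) * (((k:ℝ)+1)^2)⁻¹ := by
      apply mul_le_mul_of_nonneg_right h1 (by positivity)
  _ = 2 * (1 * (((k:ℝ)+1)^2)⁻¹) * (1 + (k:ℝ)^2) := by ring
  _ ≤ 2 * (1 * (((k:ℝ)+1)^2)⁻¹) * (1 + (k:ℝ)^2) := le_refl _

lemma sumInvInt : Summable (fun n : ℤ => ((1:ℝ) + (n:ℝ)^2)⁻¹) := by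
  apply Summable.of_nat_of_neg
  · exact sumInvNat.congr (fun k => by norm_num)
  · exact sumInvNat.congr (fun k => by push_cast; norm_num)

lemma sum_jb_rpow {s : ℝ} (hs : 1 ≤ s) : Summable (fun n : ℤ => jb n ^ (-(2*s))) := by
  apply Summable.of_nonneg_of_le (fun n => Real.rpow_nonneg (jb_pos n).le _)
    (fun n => ?_) sumInvInt
  have h1 : jb n ^ (-(2*s)) ≤ jb n ^ (-(2:ℝ)) :=
    Real.rpow_le_rpow_of_exponent_le (one_le_jb n) (by linarith)
  have h2 : jb n ^ (-(2:ℝ)) = ((1:ℝ) + (n:ℝ)^2)⁻¹ := by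
    rw [Real.rpow_neg (jb_pos n).le, show ((2:ℝ)) = ((2:ℕ):ℝ) by norm_num,
      Real.rpow_natCast, jb_sq]
  rw [← h2]; exact h1


lemma shift_summable_left (a : ℤ → ℝ) (ha : Summable fun n => a n ^ 2)
    (n : ℤ) : Summable fun m => a (n - m) ^ 2 := by
  have h := (Equiv.subLeft n).summable_iff (f := fun k => a k ^ 2)
  exact h.2 ha |>.congr (fun m => by simp)

lemma shift_summable_right (a : ℤ → ℝ) (ha : Summable fun n => a n ^ 2)
    (m : ℤ) : Summable fun n => a (n - m) ^ 2 := by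
  have h := (Equiv.subRight m).summable_iff (f := fun k => a k ^ 2)
  exact h.2 ha |>.congr (fun n => by simp)

lemma shift_tsum_right (a : ℤ → ℝ) (m : ℤ) :
    ∑' n, a (n - m) ^ 2 = ∑' k, a k ^ 2 := by
  have h := (Equiv.subRight m).tsum_eq (f := fun k => a k ^ 2)
  rw [← h]; exact tsum_congr (fun n => by simp)

/-- Young's inequality `ℓ² * ℓ¹ → ℓ²` for convolutions on `ℤ`. -/
lemma young {a b : ℤ → ℝ} (ha0 : ∀ n, 0 ≤ a n) (hb0 : ∀ n, 0 ≤ b n)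
    (ha : Summable fun n => a n ^ 2) (hb : Summable b) :
    (∀ n, Summable fun m => a (n - m) * b m) ∧
    Summable (fun n => (∑' m, a (n - m) * b m) ^ 2) ∧
    Real.sqrt (∑' n, (∑' m, a (n - m) * b m) ^ 2)
      ≤ Real.sqrt (∑' n, a n ^ 2) * (∑' m, b m) := by
  set A : ℝ := ∑' n, a n ^ 2 with hA
  set Bs : ℝ := ∑' m, b m with hBs
  have hA0 : 0 ≤ A := tsum_nonneg fun n => sq_nonneg _
  have hBs0 : 0 ≤ Bs := tsum_nonneg hb0
  have hshift : ∀ n : ℤ, Summable fun m => a (n - m) ^ 2 :=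
    fun n => shift_summable_left a ha n
  have haA : ∀ k, a k ^ 2 ≤ A := fun k => Summable.le_tsum ha k (fun m _ => sq_nonneg _)
  -- fiber sums
  have hfib : ∀ n, Summable fun m => a (n - m) ^ 2 * b m := by
    intro n
    exact Summable.of_nonneg_of_le (fun m => mul_nonneg (sq_nonneg _) (hb0 m))
      (fun m => mul_le_mul_of_nonneg_right (haA _) (hb0 m)) (hb.mul_left A)
  have hfibsum : ∀ n, (∑' m, a (n - m)^2 * b m) ≤ A * Bs := by
    intro n
    calc (∑' m, a (n - m)^2 * b m) ≤ ∑' m, A * b m :=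
          Summable.tsum_le_tsum (fun m => mul_le_mul_of_nonneg_right (haA _) (hb0 m))
            (hfib n) (hb.mul_left A)
    _ = A * Bs := tsum_mul_left
  -- pointwise summability of the convolution
  have hconv : ∀ n, Summable fun m => a (n - m) * b m := by
    intro n
    apply Summable.of_nonneg_of_le (fun m => mul_nonneg (ha0 _) (hb0 m))
      (fun m => ?_) (hb.mul_left (Real.sqrt A))
    apply mul_le_mul_of_nonneg_right _ (hb0 m)
    have := haA (n - m)
    have h0 : 0 ≤ a (n - m) := ha0 _
    rw [show a (n-m) = Real.sqrt (a (n-m)^2) from (Real.sqrt_sq h0).symm]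
    exact Real.sqrt_le_sqrt (haA _)
  -- pointwise Cauchy-Schwarz with weight b
  have hCS : ∀ n, (∑' m, a (n - m) * b m)^2 ≤ (∑' m, a (n - m)^2 * b m) * Bs := by
    intro n
    have key := tsum_CS (fun m => a (n - m) * Real.sqrt (b m)) (fun m => Real.sqrt (b m))
      (fun m => mul_nonneg (ha0 _) (Real.sqrt_nonneg _)) (fun m => Real.sqrt_nonneg _)
      (by
        apply (hfib n).congr
        intro m
        rw [mul_pow, Real.sq_sqrt (hb0 m)])
      (by
        apply hb.congr
        intro m
        rw [Real.sq_sqrt (hb0 m)])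
    have he1 : ∀ m, (a (n - m) * Real.sqrt (b m)) * Real.sqrt (b m) = a (n - m) * b m := by
      intro m
      rw [mul_assoc, Real.mul_self_sqrt (hb0 m)]
    have he2 : ∀ m, (a (n - m) * Real.sqrt (b m))^2 = a (n - m)^2 * b m := by
      intro m; rw [mul_pow, Real.sq_sqrt (hb0 m)]
    have he3 : ∀ m, (Real.sqrt (b m))^2 = b m := fun m => Real.sq_sqrt (hb0 m)
    obtain ⟨_, h2⟩ := key
    rw [tsum_congr he1, tsum_congr he2, tsum_congr he3] at h2
    have h5 : 0 ≤ ∑' m, a (n - m) * b m :=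
      tsum_nonneg fun m => mul_nonneg (ha0 _) (hb0 m)
    have h6 : 0 ≤ ∑' m, a (n - m)^2 * b m :=
      tsum_nonneg fun m => mul_nonneg (sq_nonneg _) (hb0 m)
    calc (∑' m, a (n - m) * b m)^2
        ≤ (Real.sqrt (∑' m, a (n-m)^2 * b m) * Real.sqrt Bs)^2 := by
          apply sq_le_sq' _ h2
          have := mul_nonneg (Real.sqrt_nonneg (∑' m, a (n-m)^2 * b m)) (Real.sqrt_nonneg Bs)
          linarith
    _ = (∑' m, a (n-m)^2 * b m) * Bs := by
          rw [mul_pow, Real.sq_sqrt h6, Real.sq_sqrt hBs0]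
  -- Fubini: summability of the fiber sums with total A * Bs
  have hG : Summable (fun p : ℤ × ℤ => a (p.2 - p.1)^2 * b p.1) := by
    rw [summable_prod_of_nonneg (fun p => mul_nonneg (sq_nonneg _) (hb0 _))]
    constructor
    · intro m
      exact (shift_summable_right a ha m).mul_right (b m)
    · apply Summable.congr (hb.mul_right A)
      intro m
      show b m * A = ∑' n, a (n - m) ^ 2 * b m
      rw [tsum_mul_right, shift_tsum_right a m, ← hA]
      ring
  have hF : Summable (fun p : ℤ × ℤ => a (p.1 - p.2)^2 * b p.2) := by
    have := hG.prod_symm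
    exact this.congr (fun p => rfl)
  have hmarg : Summable (fun n => ∑' m, a (n - m)^2 * b m) :=
    ((summable_prod_of_nonneg (fun p => mul_nonneg (sq_nonneg _) (hb0 _))).1 hF).2
  -- conclusion
  have hsum2 : Summable (fun n => (∑' m, a (n - m) * b m)^2) := by
    apply Summable.of_nonneg_of_le (fun n => sq_nonneg _) (fun n => (hCS n))
      (hmarg.mul_right Bs)
  refine ⟨hconv, hsum2, ?_⟩
  have htot : ∑' n, ∑' m, a (n - m)^2 * b m = A * Bs := by
    have hc := Summable.tsum_comm' (f := fun n m => a (n - m) ^ 2 * b m) hF (fun n => hfib n)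
      (fun m => (shift_summable_right a ha m).mul_right (b m))
    -- hc : ∑' m, ∑' n, a (n-m)^2 * b m = ∑' n, ∑' m, a (n-m)^2 * b m
    rw [← hc]
    have : ∀ m : ℤ, ∑' n, a (n - m)^2 * b m = A * b m := by
      intro m
      rw [tsum_mul_right, shift_tsum_right a m, ← hA]
    rw [tsum_congr this, tsum_mul_left]
  have hS : ∑' n, (∑' m, a (n - m) * b m)^2 ≤ A * Bs * Bs := by
    calc ∑' n, (∑' m, a (n - m) * b m)^2
        ≤ ∑' n, (∑' m, a (n - m)^2 * b m) * Bs :=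
          Summable.tsum_le_tsum hCS hsum2 (hmarg.mul_right Bs)
    _ = (∑' n, ∑' m, a (n - m)^2 * b m) * Bs := tsum_mul_right
    _ = A * Bs * Bs := by rw [htot]
  calc Real.sqrt (∑' n, (∑' m, a (n - m) * b m)^2)
      ≤ Real.sqrt (A * Bs * Bs) := Real.sqrt_le_sqrt hS
  _ = Real.sqrt A * Bs := by
      rw [show A * Bs * Bs = A * Bs^2 by ring, Real.sqrt_mul hA0, Real.sqrt_sq hBs0]

-- Chunk 5: the algebra property of H^{ρ,s}

lemma fmul_memH {ρ s : ℝ} (hρ : 0 < ρ) (hs : 1 ≤ s) {u f : ℤ → ℂ}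
    (hu : MemH ρ s u) (hf : MemH ρ s f) :
    (∀ n, Summable fun m => u (n - m) * f m) ∧ MemH ρ s (fmul u f) ∧
      anorm ρ s (fmul u f) ≤ Cs s * anorm ρ s u * anorm ρ s f := by
  have hs0 : (0:ℝ) ≤ s := by linarith
  set U : ℤ → ℝ := fun n => wt ρ s n * ‖u n‖ with hU
  set F : ℤ → ℝ := fun n => wt ρ s n * ‖f n‖ with hF
  set G : ℤ → ℝ := fun n => jb n ^ (-s) with hG
  set E : ℤ → ℝ := fun n => Real.exp (ρ * |(n:ℝ)|) with hE
  have hU0 : ∀ n, 0 ≤ U n := fun n => mul_nonneg (wt_pos ρ s n).le (norm_nonneg _)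
  have hF0 : ∀ n, 0 ≤ F n := fun n => mul_nonneg (wt_pos ρ s n).le (norm_nonneg _)
  have hG0 : ∀ n, 0 ≤ G n := fun n => Real.rpow_nonneg (jb_pos n).le _
  have hG1 : ∀ n, G n ≤ 1 := by
    intro n
    have := Real.rpow_le_rpow_of_exponent_le (one_le_jb n) (show -s ≤ 0 by linarith)
    simpa [Real.rpow_zero] using this
  have hUs : Summable (fun n => U n ^ 2) := memH_iff.1 hu
  have hFs : Summable (fun n => F n ^ 2) := memH_iff.1 hf
  have hG2eq : ∀ n, G n ^ 2 = jb n ^ (-(2*s)) := by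
    intro n
    rw [hG, sq, ← Real.rpow_add (jb_pos n)]
    congr 1; ring
  have hG2 : Summable (fun n => G n ^ 2) := by
    apply (sum_jb_rpow hs).congr
    intro n; rw [hG2eq n]
  set K : ℝ := Real.sqrt (∑' n, G n ^ 2) with hK
  have hK0 : (0:ℝ) ≤ K := Real.sqrt_nonneg _
  set AU : ℝ := anorm ρ s u with hAU
  set AF : ℝ := anorm ρ s f with hAF
  have hAU0 : 0 ≤ AU := anorm_nonneg ρ s u
  have hAF0 : 0 ≤ AF := anorm_nonneg ρ s f
  have hAUeq : Real.sqrt (∑' n, U n ^ 2) = AU := (anorm_eq u).symm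
  have hAFeq : Real.sqrt (∑' n, F n ^ 2) = AF := (anorm_eq f).symm
  have hCseq : Cs s = 2 ^ s * 2 * K := by
    rw [Cs, hK]
    congr 1
    · rw [Real.rpow_add_one (by norm_num : (2:ℝ) ≠ 0) s]
    · congr 1
      exact (tsum_congr (fun n => (hG2eq n).symm))
  have hGwt : ∀ m, G m * wt ρ s m = E m := by
    intro m
    rw [hG, hE, wt, ← mul_assoc, ← Real.rpow_add (jb_pos m)]
    rw [show -s + s = 0 by ring, Real.rpow_zero, one_mul]
  have hEf : ∀ m, E m * ‖f m‖ = G m * F m := by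
    intro m
    rw [hF, ← mul_assoc, hGwt m]
  have hEu : ∀ m, E m * ‖u m‖ = G m * U m := by
    intro m
    rw [hU, ← mul_assoc, hGwt m]
  -- pointwise absolute summability of the convolution
  have habs : ∀ n, Summable fun m => ‖u (n - m)‖ * ‖f m‖ := by
    intro n
    apply Summable.of_nonneg_of_le (fun m => mul_nonneg (norm_nonneg _) (norm_nonneg _))
      (fun m => ?_)
      (tsum_CS (fun m => U (n - m)) F (fun m => hU0 _) hF0
        (shift_summable_left U hUs n) hFs).1
    have h1 : ‖u (n - m)‖ ≤ U (n - m) := by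
      show ‖u (n - m)‖ ≤ wt ρ s (n - m) * ‖u (n - m)‖
      nlinarith [one_le_wt hρ.le hs0 (n - m), norm_nonneg (u (n - m))]
    have h2 : ‖f m‖ ≤ F m := by
      show ‖f m‖ ≤ wt ρ s m * ‖f m‖
      nlinarith [one_le_wt hρ.le hs0 m, norm_nonneg (f m)]
    exact mul_le_mul h1 h2 (norm_nonneg _) (hU0 _)
  have hconv : ∀ n, Summable fun m => u (n - m) * f m := by
    intro n
    apply Summable.of_norm
    exact (habs n).congr (fun m => by rw [norm_mul])
  -- the two Young convolutions
  set b₁ : ℤ → ℝ := fun m => G m * F m with hb₁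
  set b₂ : ℤ → ℝ := fun m => G m * U m with hb₂
  have hb₁0 : ∀ m, 0 ≤ b₁ m := fun m => mul_nonneg (hG0 m) (hF0 m)
  have hb₂0 : ∀ m, 0 ≤ b₂ m := fun m => mul_nonneg (hG0 m) (hU0 m)
  obtain ⟨hb₁s, hb₁le⟩ := tsum_CS G F hG0 hF0 hG2 hFs
  obtain ⟨hb₂s, hb₂le⟩ := tsum_CS G U hG0 hU0 hG2 hUs
  rw [← hK, hAFeq] at hb₁le
  rw [← hK, hAUeq] at hb₂le
  obtain ⟨hc₁conv, hc₁sq, hc₁le⟩ := young hU0 hb₁0 hUs hb₁s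
  obtain ⟨hc₂conv, hc₂sq, hc₂le⟩ := young hF0 hb₂0 hFs hb₂s
  set c₁ : ℤ → ℝ := fun n => ∑' m, U (n - m) * b₁ m with hc₁
  set c₂ : ℤ → ℝ := fun n => ∑' m, F (n - m) * b₂ m with hc₂
  have hc₁0 : ∀ n, 0 ≤ c₁ n :=
    fun n => tsum_nonneg (fun m => mul_nonneg (hU0 _) (hb₁0 m))
  have hc₂0 : ∀ n, 0 ≤ c₂ n :=
    fun n => tsum_nonneg (fun m => mul_nonneg (hF0 _) (hb₂0 m))
  rw [hAUeq] at hc₁le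
  rw [hAFeq] at hc₂le
  have hc₁B : Real.sqrt (∑' n, c₁ n ^ 2) ≤ AU * (K * AF) :=
    hc₁le.trans (by
      apply mul_le_mul_of_nonneg_left hb₁le hAU0)
  have hc₂B : Real.sqrt (∑' n, c₂ n ^ 2) ≤ AF * (K * AU) :=
    hc₂le.trans (by
      apply mul_le_mul_of_nonneg_left hb₂le hAF0)
  -- pointwise bound by the two convolutions
  have hpt : ∀ n, wt ρ s n * ‖fmul u f n‖ ≤ 2 ^ s * (c₁ n + c₂ n) := by
    intro n
    have ha1 : ‖fmul u f n‖ ≤ ∑' m, ‖u (n - m)‖ * ‖f m‖ := by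
      rw [fmul]
      calc ‖∑' m, u (n - m) * f m‖ ≤ ∑' m, ‖u (n - m) * f m‖ :=
            norm_tsum_le_tsum_norm ((habs n).congr (fun m => by rw [norm_mul]))
      _ = ∑' m, ‖u (n - m)‖ * ‖f m‖ := tsum_congr (fun m => norm_mul _ _)
    -- termwise weighted bound
    set t₂ : ℤ → ℝ := fun m => (G (n - m) * U (n - m)) * F m with ht₂
    have ht₂0 : ∀ m, 0 ≤ t₂ m := fun m => mul_nonneg (mul_nonneg (hG0 _) (hU0 _)) (hF0 m)
    have ht₂s : Summable t₂ := by
      apply (tsum_CS (fun m => G (n - m) * U (n - m)) F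
        (fun m => mul_nonneg (hG0 _) (hU0 _)) hF0 ?_ hFs).1
      apply Summable.of_nonneg_of_le (fun m => sq_nonneg _) (fun m => ?_)
        (shift_summable_left U hUs n)
      have h3 := hG1 (n - m)
      have h4 := hG0 (n - m)
      have h5 := hU0 (n - m)
      have h6 : G (n - m) ^ 2 ≤ 1 := by nlinarith
      rw [mul_pow]
      nlinarith [sq_nonneg (U (n - m))]
    have ht₂eq : ∑' m, t₂ m = c₂ n := by
      show (∑' m, t₂ m) = ∑' m, F (n - m) * b₂ m
      have h6 := (Equiv.subLeft n).tsum_eq (f := fun m => F (n - m) * b₂ m)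
      rw [← h6]
      apply tsum_congr
      intro m
      have h7 : n - (n - m) = m := by ring
      simp only [ht₂, hb₂, Equiv.subLeft_apply, h7]
      ring
    have hterm : ∀ m, wt ρ s n * (‖u (n - m)‖ * ‖f m‖)
        ≤ 2 ^ s * (U (n - m) * b₁ m + t₂ m) := by
      intro m
      have h8 := wt_conv hρ.le hs0 n m
      have h9 : (0:ℝ) ≤ ‖u (n - m)‖ * ‖f m‖ :=
        mul_nonneg (norm_nonneg _) (norm_nonneg _)
      calc wt ρ s n * (‖u (n - m)‖ * ‖f m‖)
          ≤ (2 ^ s * (wt ρ s (n - m) * E m + E (n - m) * wt ρ s m))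
              * (‖u (n - m)‖ * ‖f m‖) := by
            exact mul_le_mul_of_nonneg_right h8 h9
      _ = 2 ^ s * ((wt ρ s (n - m) * ‖u (n - m)‖) * (E m * ‖f m‖)
            + (E (n - m) * ‖u (n - m)‖) * (wt ρ s m * ‖f m‖)) := by ring
      _ = 2 ^ s * (U (n - m) * b₁ m + t₂ m) := by
            rw [hEf m, hEu (n - m)]
    calc wt ρ s n * ‖fmul u f n‖
        ≤ wt ρ s n * ∑' m, ‖u (n - m)‖ * ‖f m‖ :=
          mul_le_mul_of_nonneg_left ha1 (wt_pos ρ s n).le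
    _ = ∑' m, wt ρ s n * (‖u (n - m)‖ * ‖f m‖) := tsum_mul_left.symm
    _ ≤ ∑' m, 2 ^ s * (U (n - m) * b₁ m + t₂ m) := by
          apply Summable.tsum_le_tsum hterm ((habs n).mul_left (wt ρ s n))
          exact (((hc₁conv n).add ht₂s).mul_left (2 ^ s))
    _ = 2 ^ s * ((∑' m, U (n - m) * b₁ m) + ∑' m, t₂ m) := by
          rw [tsum_mul_left, Summable.tsum_add (hc₁conv n) ht₂s]
    _ = 2 ^ s * (c₁ n + c₂ n) := by rw [ht₂eq, hc₁]
  -- combine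
  obtain ⟨hsum12, htri⟩ := l2tri hc₁0 hc₂0 hc₁sq hc₂sq
  have hdomsq : ∀ n, (wt ρ s n * ‖fmul u f n‖)^2 ≤ (2^s)^2 * (c₁ n + c₂ n)^2 := by
    intro n
    have h0 : 0 ≤ wt ρ s n * ‖fmul u f n‖ :=
      mul_nonneg (wt_pos ρ s n).le (norm_nonneg _)
    have := hpt n
    nlinarith
  have hmem : MemH ρ s (fmul u f) := by
    rw [memH_iff]
    exact Summable.of_nonneg_of_le (fun n => sq_nonneg _) hdomsq (hsum12.mul_left _)
  refine ⟨hconv, hmem, ?_⟩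
  have h2s0 : (0:ℝ) ≤ 2 ^ s := Real.rpow_nonneg (by norm_num) s
  calc anorm ρ s (fmul u f) = Real.sqrt (∑' n, (wt ρ s n * ‖fmul u f n‖)^2) := anorm_eq _
  _ ≤ Real.sqrt ((2^s)^2 * ∑' n, (c₁ n + c₂ n)^2) := by
      apply Real.sqrt_le_sqrt
      rw [← tsum_mul_left]
      exact Summable.tsum_le_tsum hdomsq (memH_iff.1 hmem) (hsum12.mul_left _)
  _ = 2^s * Real.sqrt (∑' n, (c₁ n + c₂ n)^2) := by
      rw [Real.sqrt_mul (sq_nonneg _), Real.sqrt_sq h2s0]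
  _ ≤ 2^s * (AU * (K * AF) + AF * (K * AU)) := by
      apply mul_le_mul_of_nonneg_left _ h2s0
      exact htri.trans (add_le_add hc₁B hc₂B)
  _ = (2^s * 2 * K) * AU * AF := by ring
  _ = Cs s * anorm ρ s u * anorm ρ s f := by rw [hCseq]

-- Chunk 6: operators R0, Toep, and the H^{ρ,s}_+ submodule

lemma Cs_nonneg (s : ℝ) : 0 ≤ Cs s :=
  mul_nonneg (Real.rpow_nonneg (by norm_num) _) (Real.sqrt_nonneg _)

lemma cplus_zero (v : ℤ → ℂ) {n : ℤ} (hn : n ≤ 0) : Cplus v n = 0 := by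
  simp [Cplus, not_lt.2 hn]

lemma cplus_norm_le (v : ℤ → ℂ) (n : ℤ) : ‖Cplus v n‖ ≤ ‖v n‖ := by
  rw [Cplus]; split
  · exact le_refl _
  · simp

lemma r0_zero (κ : ℝ) (g : ℤ → ℂ) {n : ℤ} (hn : n ≤ 0) : R0 κ g n = 0 := by
  simp [R0, not_lt.2 hn]

lemma two_n_add_pos {κ : ℝ} (hκ : 0 < κ) {n : ℤ} (hn : 0 < n) :
    (0:ℝ) < 2 * (n:ℝ) + κ := by
  have : (1:ℝ) ≤ (n:ℝ) := by exact_mod_cast hn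
  linarith

lemma r0_cast {κ : ℝ} (n : ℤ) :
    (2 * (n:ℂ) + (κ:ℂ)) = ((2 * (n:ℝ) + κ : ℝ) : ℂ) := by push_cast; ring

lemma r0_norm_le {κ : ℝ} (hκ : 0 < κ) (g : ℤ → ℂ) (n : ℤ) :
    ‖R0 κ g n‖ ≤ κ⁻¹ * ‖g n‖ := by
  rw [R0]
  split
  · rename_i hn
    rw [norm_mul, norm_inv, r0_cast, Complex.norm_real,
      Real.norm_of_nonneg (two_n_add_pos hκ hn).le]
    apply mul_le_mul_of_nonneg_right _ (norm_nonneg _)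
    apply inv_anti₀ hκ
    have : (1:ℝ) ≤ (n:ℝ) := by exact_mod_cast hn
    linarith
  · simp; positivity

lemma r0_memH {ρ s κ : ℝ} (hκ : 0 < κ) {g : ℤ → ℂ} (hg : MemH ρ s g) :
    MemH ρ s (R0 κ g) ∧ anorm ρ s (R0 κ g) ≤ κ⁻¹ * anorm ρ s g := by
  apply anorm_dom (by positivity) _ hg
  intro n
  calc wt ρ s n * ‖R0 κ g n‖ ≤ wt ρ s n * (κ⁻¹ * ‖g n‖) :=
        mul_le_mul_of_nonneg_left (r0_norm_le hκ g n) (wt_pos ρ s n).le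
  _ = κ⁻¹ * (wt ρ s n * ‖g n‖) := by ring

lemma jb_le_two_n {n : ℤ} (hn : 0 < n) : jb n ≤ 2 * (n:ℝ) := by
  have h1 : (1:ℝ) ≤ (n:ℝ) := by exact_mod_cast hn
  have h2 : 1 + (n:ℝ)^2 ≤ (2*(n:ℝ))^2 := by nlinarith
  calc jb n = Real.sqrt (1 + (n:ℝ)^2) := rfl
  _ ≤ Real.sqrt ((2*(n:ℝ))^2) := Real.sqrt_le_sqrt h2
  _ = 2*(n:ℝ) := Real.sqrt_sq (by linarith)

lemma wt_succ (ρ s : ℝ) (n : ℤ) : wt ρ (s+1) n = jb n * wt ρ s n := by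
  rw [wt, wt, Real.rpow_add_one (jb_pos n).ne' s]
  ring

lemma r0_memH_succ {ρ s κ : ℝ} (hκ : 0 < κ) {g : ℤ → ℂ} (hg : MemH ρ s g) :
    MemH ρ (s+1) (R0 κ g) ∧ anorm ρ (s+1) (R0 κ g) ≤ 1 * anorm ρ s g := by
  apply anorm_dom (by norm_num) _ hg
  intro n
  rw [one_mul, wt_succ]
  rcases le_or_gt n 0 with hn|hn
  · rw [r0_zero κ g hn]
    simp only [norm_zero, mul_zero]
    exact mul_nonneg (wt_pos ρ s n).le (norm_nonneg _)
  · have h1 : ‖R0 κ g n‖ = (2*(n:ℝ)+κ)⁻¹ * ‖g n‖ := by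
      rw [R0, if_pos hn, norm_mul, norm_inv, r0_cast, Complex.norm_real,
        Real.norm_of_nonneg (two_n_add_pos hκ hn).le]
    rw [h1]
    have h2 : jb n * (2*(n:ℝ)+κ)⁻¹ ≤ 1 := by
      rw [← le_div_iff₀ (by positivity), one_div, inv_inv]
      calc jb n ≤ 2*(n:ℝ) := jb_le_two_n hn
      _ ≤ 2*(n:ℝ) + κ := by linarith
    calc jb n * wt ρ s n * ((2*(n:ℝ)+κ)⁻¹ * ‖g n‖)
        = (jb n * (2*(n:ℝ)+κ)⁻¹) * (wt ρ s n * ‖g n‖) := by ring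
    _ ≤ 1 * (wt ρ s n * ‖g n‖) := by
        apply mul_le_mul_of_nonneg_right h2
        exact mul_nonneg (wt_pos ρ s n).le (norm_nonneg _)
    _ = wt ρ s n * ‖g n‖ := one_mul _

lemma toep_memH {ρ s : ℝ} (hρ : 0 < ρ) (hs : 1 ≤ s) {u g : ℤ → ℂ}
    (hu : MemH ρ s u) (hg : MemH ρ s g) :
    MemH ρ s (Toep u g) ∧ anorm ρ s (Toep u g) ≤ Cs s * anorm ρ s u * anorm ρ s g := by
  obtain ⟨hconv, hmem, hbound⟩ := fmul_memH hρ hs hu hg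
  have hd := anorm_dom (c := 1) (by norm_num) (v := Toep u g) (w := fmul u g)
    (fun n => by
      rw [one_mul]
      exact mul_le_mul_of_nonneg_left (cplus_norm_le _ n) (wt_pos ρ s n).le) hmem
  exact ⟨hd.1, by linarith [hd.2, hbound]⟩

lemma memH_neg {ρ s : ℝ} {v : ℤ → ℂ} (hv : MemH ρ s v) :
    MemH ρ s (fun n => -v n) ∧ anorm ρ s (fun n => -v n) ≤ 1 * anorm ρ s v :=
  anorm_dom (by norm_num) (fun n => by rw [one_mul, norm_neg]) hv

lemma memH_sub {ρ s : ℝ} {v w : ℤ → ℂ} (hv : MemH ρ s v) (hw : MemH ρ s w) :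
    MemH ρ s (fun n => v n - w n) ∧
      anorm ρ s (fun n => v n - w n) ≤ anorm ρ s v + anorm ρ s w := by
  obtain ⟨hnw, hnwle⟩ := memH_neg hw
  obtain ⟨hm, hle⟩ := anorm_add hv hnw
  have he : ∀ n : ℤ, v n + (fun k => -w k) n = v n - w n := fun n => by ring
  constructor
  · rw [memH_iff] at hm ⊢
    exact hm.congr (fun n => by rw [← he n])
  · rw [anorm_congr (fun n => (he n).symm)]
    calc anorm ρ s (fun n => v n + (fun k => -w k) n)
        ≤ anorm ρ s v + anorm ρ s (fun k => -w k) := hle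
    _ ≤ anorm ρ s v + anorm ρ s w := by linarith

lemma memH_smul {ρ s : ℝ} (c : ℂ) {v : ℤ → ℂ} (hv : MemH ρ s v) :
    MemH ρ s (fun n => c * v n) ∧ anorm ρ s (fun n => c * v n) ≤ ‖c‖ * anorm ρ s v :=
  anorm_dom (norm_nonneg c) (fun n => by rw [norm_mul]; ring_nf; exact le_refl _) hv

/-- `H₊^{ρ,s}` as a submodule of the space of coefficient sequences. -/
def HplusSub (ρ s : ℝ) : Submodule ℂ (ℤ → ℂ) where
  carrier := {g | MemHplus ρ s g}
  zero_mem' := ⟨memH_zero ρ s, fun _ _ => rfl⟩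
  add_mem' := by
    intro a b ha hb
    refine ⟨?_, fun n hn => ?_⟩
    · have := (anorm_add ha.1 hb.1).1
      rw [memH_iff] at this ⊢
      exact this.congr (fun n => rfl)
    · show a n + b n = 0
      rw [ha.2 n hn, hb.2 n hn, add_zero]
  smul_mem' := by
    intro c v hv
    refine ⟨?_, fun n hn => ?_⟩
    · have := (memH_smul c hv.1).1
      rw [memH_iff] at this ⊢
      exact this.congr (fun n => rfl)
    · show c * v n = 0
      rw [hv.2 n hn, mul_zero]

-- Chunk 7: the Neumann series

/-- The iterated operator `A = T_u R₀(κ)`. -/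
def AOp (u : ℤ → ℂ) (κ : ℝ) : (ℤ → ℂ) → (ℤ → ℂ) := fun h => Toep u (R0 κ h)

/-- The Neumann series `Σ_j (-1)^j A^j g`. -/
def TserF (u : ℤ → ℂ) (κ : ℝ) (g : ℤ → ℂ) : ℤ → ℂ :=
  fun n => ∑' j : ℕ, (-1:ℂ)^j * (AOp u κ)^[j] g n

/-- The resolvent `R(κ,u) = R₀(κ) Σ_j (-1)^j A^j`. -/
def RresF (u : ℤ → ℂ) (κ : ℝ) (g : ℤ → ℂ) : ℤ → ℂ := R0 κ (TserF u κ g)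

lemma A_bound {ρ s κ : ℝ} (hρ : 0 < ρ) (hs : 1 ≤ s) (hκ0 : 0 < κ) {u g : ℤ → ℂ}
    (hu : MemH ρ s u) (hg : MemHplus ρ s g) :
    MemHplus ρ s (AOp u κ g) ∧
      anorm ρ s (AOp u κ g) ≤ (Cs s * anorm ρ s u * κ⁻¹) * anorm ρ s g := by
  obtain ⟨h1, h2⟩ := r0_memH (ρ := ρ) (s := s) hκ0 hg.1
  obtain ⟨h3, h4⟩ := toep_memH hρ hs hu h1
  refine ⟨⟨h3, fun n hn => cplus_zero _ hn⟩, ?_⟩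
  have h5 : 0 ≤ Cs s * anorm ρ s u :=
    mul_nonneg (Cs_nonneg s) (anorm_nonneg ρ s u)
  calc anorm ρ s (AOp u κ g) ≤ Cs s * anorm ρ s u * anorm ρ s (R0 κ g) := h4
  _ ≤ Cs s * anorm ρ s u * (κ⁻¹ * anorm ρ s g) := mul_le_mul_of_nonneg_left h2 h5
  _ = (Cs s * anorm ρ s u * κ⁻¹) * anorm ρ s g := by ring

lemma iter_bound {ρ s κ : ℝ} (hρ : 0 < ρ) (hs : 1 ≤ s) (hκ0 : 0 < κ) {u g : ℤ → ℂ}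
    (hu : MemH ρ s u) (hg : MemHplus ρ s g) (j : ℕ) :
    MemHplus ρ s ((AOp u κ)^[j] g) ∧
      anorm ρ s ((AOp u κ)^[j] g)
        ≤ (Cs s * anorm ρ s u * κ⁻¹)^j * anorm ρ s g := by
  induction j with
  | zero =>
    refine ⟨hg, ?_⟩
    rw [Function.iterate_zero_apply, pow_zero, one_mul]
  | succ j ih =>
    rw [Function.iterate_succ_apply']
    obtain ⟨h1, h2⟩ := A_bound hρ hs hκ0 hu ih.1
    refine ⟨h1, ?_⟩
    have h5 : 0 ≤ Cs s * anorm ρ s u * κ⁻¹ :=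
      mul_nonneg (mul_nonneg (Cs_nonneg s) (anorm_nonneg ρ s u)) (by positivity)
    calc anorm ρ s (AOp u κ ((AOp u κ)^[j] g))
        ≤ (Cs s * anorm ρ s u * κ⁻¹) * anorm ρ s ((AOp u κ)^[j] g) := h2
    _ ≤ (Cs s * anorm ρ s u * κ⁻¹) * ((Cs s * anorm ρ s u * κ⁻¹)^j * anorm ρ s g) :=
        mul_le_mul_of_nonneg_left ih.2 h5
    _ = (Cs s * anorm ρ s u * κ⁻¹)^(j+1) * anorm ρ s g := by ring

lemma iter_zero {ρ s κ : ℝ} {u g : ℤ → ℂ} (hg : MemHplus ρ s g) (j : ℕ)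
    {n : ℤ} (hn : n ≤ 0) : (AOp u κ)^[j] g n = 0 := by
  cases j with
  | zero => exact hg.2 n hn
  | succ j =>
    rw [Function.iterate_succ_apply']
    exact cplus_zero _ hn

lemma norm_neg_one_pow (j : ℕ) : ‖(-1:ℂ)^j‖ = 1 := by
  rw [norm_pow, norm_neg, norm_one, one_pow]

/-- Tail bound for the Neumann series, shifted by `N`. -/
lemma tser_tail {ρ s κ : ℝ} (hρ : 0 < ρ) (hs : 1 ≤ s) (hκ0 : 0 < κ) {u g : ℤ → ℂ}
    (hu : MemH ρ s u) (hg : MemHplus ρ s g)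
    (hr1 : Cs s * anorm ρ s u * κ⁻¹ < 1) (N : ℕ) :
    (∀ n, Summable fun j : ℕ => (-1:ℂ)^(j+N) * (AOp u κ)^[j+N] g n) ∧
    MemH ρ s (fun n => ∑' j : ℕ, (-1:ℂ)^(j+N) * (AOp u κ)^[j+N] g n) ∧
    anorm ρ s (fun n => ∑' j : ℕ, (-1:ℂ)^(j+N) * (AOp u κ)^[j+N] g n)
      ≤ (Cs s * anorm ρ s u * κ⁻¹)^N *
          ((1 - Cs s * anorm ρ s u * κ⁻¹)⁻¹ * anorm ρ s g) := by
  set r : ℝ := Cs s * anorm ρ s u * κ⁻¹ with hrdef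
  have hr0 : 0 ≤ r :=
    mul_nonneg (mul_nonneg (Cs_nonneg s) (anorm_nonneg ρ s u)) (by positivity)
  set c : ℕ → ℤ → ℂ := fun j => fun n => (-1:ℂ)^(j+N) * (AOp u κ)^[j+N] g n with hcdef
  set bnd : ℕ → ℝ := fun j => r^(j+N) * anorm ρ s g with hbnddef
  have hmem : ∀ j, MemH ρ s (c j) := by
    intro j
    exact (memH_smul ((-1:ℂ)^(j+N)) (iter_bound hρ hs hκ0 hu hg (j+N)).1.1).1
  have hle : ∀ j, anorm ρ s (c j) ≤ bnd j := by
    intro j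
    calc anorm ρ s (c j) ≤ ‖(-1:ℂ)^(j+N)‖ * anorm ρ s ((AOp u κ)^[j+N] g) :=
          (memH_smul ((-1:ℂ)^(j+N)) (iter_bound hρ hs hκ0 hu hg (j+N)).1.1).2
    _ = anorm ρ s ((AOp u κ)^[j+N] g) := by rw [norm_neg_one_pow, one_mul]
    _ ≤ r^(j+N) * anorm ρ s g := (iter_bound hρ hs hκ0 hu hg (j+N)).2
  have hbnd : Summable bnd := by
    have h1 : Summable (fun j : ℕ => r ^ (j+N)) := by
      have h2 := (summable_geometric_of_lt_one hr0 hr1).mul_right (r^N)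
      apply h2.congr
      intro j
      rw [pow_add]
    exact h1.mul_right _
  obtain ⟨h1, h2, h3⟩ := anorm_tsum_le (le_of_lt hρ) (by linarith) c bnd hmem hle hbnd
  refine ⟨h1, h2, h3.trans ?_⟩
  have h4 : ∑' j : ℕ, bnd j = r^N * ((1-r)⁻¹ * anorm ρ s g) := by
    rw [hbnddef]
    have h5 : ∀ j : ℕ, r^(j+N) * anorm ρ s g = r^N * anorm ρ s g * r^j :=
      fun j => by rw [pow_add]; ring
    rw [tsum_congr h5, tsum_mul_left, tsum_geometric_of_lt_one hr0 hr1]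
    ring
  rw [h4]

/-- Norm and membership of the full Neumann series. -/
lemma tser_bound {ρ s κ : ℝ} (hρ : 0 < ρ) (hs : 1 ≤ s) (hκ0 : 0 < κ) {u g : ℤ → ℂ}
    (hu : MemH ρ s u) (hg : MemHplus ρ s g)
    (hr1 : Cs s * anorm ρ s u * κ⁻¹ < 1) :
    (∀ n, Summable fun j : ℕ => (-1:ℂ)^j * (AOp u κ)^[j] g n) ∧
    MemHplus ρ s (TserF u κ g) ∧
    anorm ρ s (TserF u κ g)
      ≤ (1 - Cs s * anorm ρ s u * κ⁻¹)⁻¹ * anorm ρ s g := by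
  obtain ⟨h1, h2, h3⟩ := tser_tail hρ hs hκ0 hu hg hr1 0
  have he : ∀ (j : ℕ) (n : ℤ), (-1:ℂ)^(j+0) * (AOp u κ)^[j+0] g n
      = (-1:ℂ)^j * (AOp u κ)^[j] g n := by intro j n; norm_num
  have h1' : ∀ n, Summable fun j : ℕ => (-1:ℂ)^j * (AOp u κ)^[j] g n := by
    intro n
    exact (h1 n).congr (fun j => he j n)
  have heq : (fun n => ∑' j : ℕ, (-1:ℂ)^(j+0) * (AOp u κ)^[j+0] g n) = TserF u κ g := by
    funext n
    exact tsum_congr (fun j => he j n)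
  rw [heq] at h2 h3
  refine ⟨h1', ⟨h2, ?_⟩, ?_⟩
  · intro n hn
    rw [TserF]
    have : ∀ j : ℕ, (-1:ℂ)^j * (AOp u κ)^[j] g n = 0 := by
      intro j
      rw [iter_zero hg j hn, mul_zero]
    rw [tsum_congr this, tsum_zero]
  · have hr0 : 0 ≤ Cs s * anorm ρ s u * κ⁻¹ :=
      mul_nonneg (mul_nonneg (Cs_nonneg s) (anorm_nonneg ρ s u)) (by positivity)
    calc anorm ρ s (TserF u κ g)
        ≤ (Cs s * anorm ρ s u * κ⁻¹)^0 *
            ((1 - Cs s * anorm ρ s u * κ⁻¹)⁻¹ * anorm ρ s g) := h3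
    _ = (1 - Cs s * anorm ρ s u * κ⁻¹)⁻¹ * anorm ρ s g := by rw [pow_zero, one_mul]

-- Chunk 8: interchanging A with the Neumann series

lemma l2_of_memH {ρ s : ℝ} (hρ : 0 ≤ ρ) (hs : 0 ≤ s) {v : ℤ → ℂ} (hv : MemH ρ s v) :
    Summable fun n => ‖v n‖^2 := by
  apply Summable.of_nonneg_of_le (fun n => sq_nonneg _) (fun n => ?_) (memH_iff.1 hv)
  have h1 := one_le_wt hρ hs n
  have h2 : ‖v n‖ ≤ wt ρ s n * ‖v n‖ := by nlinarith [norm_nonneg (v n)]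
  nlinarith [norm_nonneg (v n), mul_nonneg (wt_pos ρ s n).le (norm_nonneg (v n))]

lemma inv_wt_le {ρ s : ℝ} (hρ : 0 ≤ ρ) (n : ℤ) :
    (wt ρ s n)⁻¹ ≤ jb n ^ (-s) := by
  have h1 : jb n ^ s ≤ wt ρ s n := by
    rw [wt]
    nlinarith [Real.one_le_exp (show 0 ≤ ρ * |(n:ℝ)| by positivity),
      Real.rpow_nonneg (jb_pos n).le s]
  have h2 : (0:ℝ) < jb n ^ s := Real.rpow_pos_of_pos (jb_pos n) s
  calc (wt ρ s n)⁻¹ ≤ (jb n ^ s)⁻¹ := by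
        apply inv_anti₀ h2 h1
  _ = jb n ^ (-s) := (Real.rpow_neg (jb_pos n).le s).symm

lemma inv_wt_sq_summable {ρ s : ℝ} (hρ : 0 ≤ ρ) (hs : 1 ≤ s) :
    Summable fun n : ℤ => ((wt ρ s n)⁻¹)^2 := by
  have hG : Summable (fun n : ℤ => (jb n ^ (-s))^2) := by
    apply (sum_jb_rpow hs).congr
    intro n
    rw [sq, ← Real.rpow_add (jb_pos n)]
    congr 1; ring
  apply Summable.of_nonneg_of_le (fun n => sq_nonneg _) (fun n => ?_) hG
  have h1 := inv_wt_le (s := s) hρ n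
  have h2 : (0:ℝ) ≤ (wt ρ s n)⁻¹ := inv_nonneg.2 (wt_pos ρ s n).le
  nlinarith

lemma uconv_summable {ρ s : ℝ} (hρ : 0 < ρ) (hs : 1 ≤ s) {u : ℤ → ℂ}
    (hu : MemH ρ s u) (n : ℤ) :
    Summable fun m => ‖u (n - m)‖ * (wt ρ s m)⁻¹ := by
  exact (tsum_CS (fun m => ‖u (n - m)‖) (fun m => (wt ρ s m)⁻¹)
    (fun m => norm_nonneg _) (fun m => inv_nonneg.2 (wt_pos ρ s m).le)
    (shift_summable_left (fun k => ‖u k‖) (l2_of_memH hρ.le (by linarith) hu) n)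
    (inv_wt_sq_summable hρ.le hs)).1

/-- `A` commutes with the Neumann series. -/
lemma a_tser {ρ s κ : ℝ} (hρ : 0 < ρ) (hs : 1 ≤ s) (hκ0 : 0 < κ) {u g : ℤ → ℂ}
    (hu : MemH ρ s u) (hg : MemHplus ρ s g)
    (hr1 : Cs s * anorm ρ s u * κ⁻¹ < 1) (n : ℤ) :
    AOp u κ (TserF u κ g) n = ∑' j : ℕ, (-1:ℂ)^j * (AOp u κ)^[j+1] g n := by
  set r : ℝ := Cs s * anorm ρ s u * κ⁻¹ with hrdef
  have hr0 : 0 ≤ r :=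
    mul_nonneg (mul_nonneg (Cs_nonneg s) (anorm_nonneg ρ s u)) (by positivity)
  -- Step A: R0 of the series, pointwise
  have hstepA : ∀ m, R0 κ (TserF u κ g) m
      = ∑' j : ℕ, (-1:ℂ)^j * R0 κ ((AOp u κ)^[j] g) m := by
    intro m
    rcases le_or_gt m 0 with hm|hm
    · rw [r0_zero κ _ hm]
      symm
      have h0 : ∀ j : ℕ, (-1:ℂ)^j * R0 κ ((AOp u κ)^[j] g) m = 0 := fun j => by
        rw [r0_zero κ _ hm, mul_zero]
      rw [tsum_congr h0, tsum_zero]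
    · show (if 0 < m then (2*(m:ℂ)+κ)⁻¹ * TserF u κ g m else 0) = _
      rw [if_pos hm, TserF, ← tsum_mul_left]
      apply tsum_congr
      intro j
      show (2*(m:ℂ)+κ)⁻¹ * ((-1:ℂ)^j * (AOp u κ)^[j] g m)
          = (-1:ℂ)^j * (if 0 < m then (2*(m:ℂ)+κ)⁻¹ * ((AOp u κ)^[j] g) m else 0)
      rw [if_pos hm]
      ring
  -- norms of the series terms
  have hR0j : ∀ j : ℕ, MemH ρ s (R0 κ ((AOp u κ)^[j] g)) ∧
      anorm ρ s (R0 κ ((AOp u κ)^[j] g)) ≤ κ⁻¹ * (r^j * anorm ρ s g) := by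
    intro j
    obtain ⟨h1, h2⟩ := r0_memH (ρ := ρ) (s := s) hκ0 (iter_bound hρ hs hκ0 hu hg j).1.1
    exact ⟨h1, h2.trans (mul_le_mul_of_nonneg_left
      (iter_bound hρ hs hκ0 hu hg j).2 (by positivity))⟩
  have hnorm_bd : ∀ (j : ℕ) (m : ℤ),
      ‖u (n - m) * ((-1:ℂ)^j * R0 κ ((AOp u κ)^[j] g) m)‖
        ≤ (‖u (n - m)‖ * (wt ρ s m)⁻¹) * (κ⁻¹ * (anorm ρ s g) * r^j) := by
    intro j m
    rw [norm_mul, norm_mul, norm_neg_one_pow, one_mul]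
    have h1 : ‖R0 κ ((AOp u κ)^[j] g) m‖ ≤ (wt ρ s m)⁻¹ * (κ⁻¹ * (r^j * anorm ρ s g)) := by
      have h2 := (weighted_le_anorm (hR0j j).1 m).trans (hR0j j).2
      have h3 := wt_pos ρ s m
      rw [inv_mul_eq_div, le_div_iff₀ h3]
      calc ‖R0 κ ((AOp u κ)^[j] g) m‖ * wt ρ s m
          = wt ρ s m * ‖R0 κ ((AOp u κ)^[j] g) m‖ := mul_comm _ _
      _ ≤ _ := h2
    calc ‖u (n - m)‖ * ‖R0 κ ((AOp u κ)^[j] g) m‖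
        ≤ ‖u (n - m)‖ * ((wt ρ s m)⁻¹ * (κ⁻¹ * (r^j * anorm ρ s g))) :=
          mul_le_mul_of_nonneg_left h1 (norm_nonneg _)
    _ = (‖u (n - m)‖ * (wt ρ s m)⁻¹) * (κ⁻¹ * (anorm ρ s g) * r^j) := by ring
  -- summability of the double family
  have hgeo : Summable (fun j : ℕ => κ⁻¹ * (anorm ρ s g) * r^j) :=
    (summable_geometric_of_lt_one hr0 hr1).mul_left _
  have hprod : Summable (Function.uncurry
      (fun (j : ℕ) (m : ℤ) => u (n - m) * ((-1:ℂ)^j * R0 κ ((AOp u κ)^[j] g) m))) := by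
    apply Summable.of_norm
    apply Summable.of_nonneg_of_le (fun p => norm_nonneg _) (fun p => ?_)
      ((hgeo.mul_of_nonneg (uconv_summable hρ hs hu n)
        (fun j => mul_nonneg (mul_nonneg (by positivity) (anorm_nonneg ρ s g)) (pow_nonneg hr0 j))
        (fun m => mul_nonneg (norm_nonneg _) (inv_nonneg.2 (wt_pos ρ s m).le))))
    calc ‖u (n - p.2) * ((-1:ℂ)^p.1 * R0 κ ((AOp u κ)^[p.1] g) p.2)‖
        ≤ (‖u (n - p.2)‖ * (wt ρ s p.2)⁻¹) * (κ⁻¹ * (anorm ρ s g) * r^p.1) :=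
          hnorm_bd p.1 p.2
    _ = (κ⁻¹ * (anorm ρ s g) * r^p.1) * (‖u (n - p.2)‖ * (wt ρ s p.2)⁻¹) := by ring
  have hfib_j : ∀ j : ℕ, Summable
      (fun m => u (n - m) * ((-1:ℂ)^j * R0 κ ((AOp u κ)^[j] g) m)) := by
    intro j
    apply Summable.of_norm
    apply Summable.of_nonneg_of_le (fun m => norm_nonneg _) (fun m => hnorm_bd j m)
      ((uconv_summable hρ hs hu n).mul_right _)
  have hfib_m : ∀ m : ℤ, Summable
      (fun j : ℕ => u (n - m) * ((-1:ℂ)^j * R0 κ ((AOp u κ)^[j] g) m)) := by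
    intro m
    apply Summable.of_norm
    apply Summable.of_nonneg_of_le (fun j => norm_nonneg _) (fun j => hnorm_bd j m)
      (((summable_geometric_of_lt_one hr0 hr1).mul_left _).mul_left _)
  have hswap := Summable.tsum_comm'
    (f := fun (j : ℕ) (m : ℤ) => u (n - m) * ((-1:ℂ)^j * R0 κ ((AOp u κ)^[j] g) m))
    hprod hfib_j hfib_m
  -- Step B: fmul of the series
  have hstepB : fmul u (R0 κ (TserF u κ g)) n
      = ∑' j : ℕ, (-1:ℂ)^j * fmul u (R0 κ ((AOp u κ)^[j] g)) n := by
    calc fmul u (R0 κ (TserF u κ g)) n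
        = ∑' m, u (n - m) * R0 κ (TserF u κ g) m := rfl
    _ = ∑' m, ∑' j : ℕ, u (n - m) * ((-1:ℂ)^j * R0 κ ((AOp u κ)^[j] g) m) := by
        apply tsum_congr
        intro m
        rw [hstepA m, tsum_mul_left]
    _ = ∑' j : ℕ, ∑' m, u (n - m) * ((-1:ℂ)^j * R0 κ ((AOp u κ)^[j] g) m) := hswap
    _ = ∑' j : ℕ, (-1:ℂ)^j * fmul u (R0 κ ((AOp u κ)^[j] g)) n := by
        apply tsum_congr
        intro j
        rw [fmul, ← tsum_mul_left]
        apply tsum_congr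
        intro m
        ring
  -- Step C: conclusion
  rcases le_or_gt n 0 with hn|hn
  · rw [show AOp u κ (TserF u κ g) n = 0 from cplus_zero _ hn]
    symm
    have h0 : ∀ j : ℕ, (-1:ℂ)^j * (AOp u κ)^[j+1] g n = 0 := fun j => by
      rw [iter_zero hg (j+1) hn, mul_zero]
    rw [tsum_congr h0, tsum_zero]
  · have hC : AOp u κ (TserF u κ g) n = fmul u (R0 κ (TserF u κ g)) n := by
      show Cplus _ n = _
      rw [Cplus]
      simp only [if_pos hn]
    rw [hC, hstepB]
    apply tsum_congr
    intro j
    congr 1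
    rw [Function.iterate_succ_apply']
    show fmul u (R0 κ ((AOp u κ)^[j] g)) n = Cplus (fmul u (R0 κ ((AOp u κ)^[j] g))) n
    rw [Cplus]
    simp only [if_pos hn]

-- Chunk 9: the resolvent identity and linearity

lemma tne {κ : ℝ} (hκ0 : 0 < κ) {n : ℤ} (hn : 0 < n) : (2*(n:ℂ)+(κ:ℂ)) ≠ 0 := by
  rw [r0_cast]
  exact_mod_cast Complex.ofReal_ne_zero.2 (two_n_add_pos hκ0 hn).ne'

lemma rres_eq {ρ s κ : ℝ} (hρ : 0 < ρ) (hs : 1 ≤ s) (hκ0 : 0 < κ) {u g : ℤ → ℂ}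
    (hu : MemH ρ s u) (hg : MemHplus ρ s g)
    (hr1 : Cs s * anorm ρ s u * κ⁻¹ < 1) (n : ℤ) :
    LaxOp u (RresF u κ g) n + (κ:ℂ) * RresF u κ g n = g n := by
  rcases le_or_gt n 0 with hn|hn
  · have h1 : RresF u κ g n = 0 := r0_zero κ _ hn
    have h2 : Toep u (RresF u κ g) n = 0 := cplus_zero _ hn
    rw [LaxOp, h1, h2, hg.2 n hn]
    ring
  · have hAT := a_tser hρ hs hκ0 hu hg hr1 n
    have hsumj := (tser_bound hρ hs hκ0 hu hg hr1).1 n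
    have hT : TserF u κ g n = g n - AOp u κ (TserF u κ g) n := by
      have h0 := Summable.tsum_eq_zero_add hsumj
      rw [TserF, h0]
      simp only [pow_zero, Function.iterate_zero_apply, one_mul]
      rw [hAT]
      have h1 : ∀ j : ℕ, (-1:ℂ)^(j+1) * (AOp u κ)^[j+1] g n
          = -((-1:ℂ)^j * (AOp u κ)^[j+1] g n) := fun j => by rw [pow_succ]; ring
      rw [tsum_congr h1, tsum_neg]
      ring
    have hR : RresF u κ g n = (2*(n:ℂ)+κ)⁻¹ * TserF u κ g n := by
      show (if 0 < n then (2*(n:ℂ)+κ)⁻¹ * TserF u κ g n else 0) = _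
      rw [if_pos hn]
    have hToep : Toep u (RresF u κ g) n = AOp u κ (TserF u κ g) n := rfl
    have hne := tne hκ0 hn
    rw [LaxOp, hToep, hR, hT]
    field_simp
    ring

lemma rres_bound {ρ s κ : ℝ} (hρ : 0 < ρ) (hs : 1 ≤ s) (hκ0 : 0 < κ) {u g : ℤ → ℂ}
    (hu : MemH ρ s u) (hg : MemHplus ρ s g)
    (hr1 : Cs s * anorm ρ s u * κ⁻¹ < 1) :
    MemHplus ρ (s+1) (RresF u κ g) ∧ MemHplus ρ s (RresF u κ g) ∧
      anorm ρ s (RresF u κ g)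
        ≤ κ⁻¹ * ((1 - Cs s * anorm ρ s u * κ⁻¹)⁻¹ * anorm ρ s g) := by
  obtain ⟨hsum, hTm, hTb⟩ := tser_bound hρ hs hκ0 hu hg hr1
  obtain ⟨h1, h2⟩ := r0_memH_succ (ρ := ρ) (s := s) hκ0 hTm.1
  obtain ⟨h3, h4⟩ := r0_memH (ρ := ρ) (s := s) hκ0 hTm.1
  refine ⟨⟨h1, fun n hn => r0_zero κ _ hn⟩, ⟨h3, fun n hn => r0_zero κ _ hn⟩, ?_⟩
  exact h4.trans (mul_le_mul_of_nonneg_left hTb (by positivity))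

-- pointwise linearity of R0 and Cplus
lemma r0_add_pt (κ : ℝ) (x y : ℤ → ℂ) (n : ℤ) :
    R0 κ (fun k => x k + y k) n = R0 κ x n + R0 κ y n := by
  simp only [R0]
  split <;> ring

lemma r0_smul_pt (κ : ℝ) (c : ℂ) (x : ℤ → ℂ) (n : ℤ) :
    R0 κ (fun k => c * x k) n = c * R0 κ x n := by
  simp only [R0]
  split <;> ring

lemma fmul_add_right {u x y : ℤ → ℂ}
    (hx : ∀ n, Summable fun m => u (n - m) * x m)
    (hy : ∀ n, Summable fun m => u (n - m) * y m) (n : ℤ) :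
    fmul u (fun k => x k + y k) n = fmul u x n + fmul u y n := by
  rw [fmul, fmul, fmul, ← Summable.tsum_add (hx n) (hy n)]
  apply tsum_congr
  intro m
  ring

lemma fmul_smul_right (u : ℤ → ℂ) (c : ℂ) (x : ℤ → ℂ) (n : ℤ) :
    fmul u (fun k => c * x k) n = c * fmul u x n := by
  rw [fmul, fmul, ← tsum_mul_left]
  apply tsum_congr
  intro m
  ring

lemma aop_add_pt {ρ s κ : ℝ} (hρ : 0 < ρ) (hs : 1 ≤ s) (hκ0 : 0 < κ) {u x y : ℤ → ℂ}
    (hu : MemH ρ s u) (hx : MemH ρ s x) (hy : MemH ρ s y) (n : ℤ) :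
    AOp u κ (fun k => x k + y k) n = AOp u κ x n + AOp u κ y n := by
  have hxr := (r0_memH (ρ := ρ) (s := s) hκ0 hx).1
  have hyr := (r0_memH (ρ := ρ) (s := s) hκ0 hy).1
  have h1 : ∀ m, R0 κ (fun k => x k + y k) m = (fun k => R0 κ x k + R0 κ y k) m :=
    fun m => r0_add_pt κ x y m
  show Cplus (fmul u (R0 κ (fun k => x k + y k))) n = _
  rw [show R0 κ (fun k => x k + y k) = fun k => R0 κ x k + R0 κ y k from funext h1]
  have h2 : fmul u (fun k => R0 κ x k + R0 κ y k) n
      = fmul u (R0 κ x) n + fmul u (R0 κ y) n :=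
    fmul_add_right (fun n' => (fmul_memH hρ hs hu hxr).1 n')
      (fun n' => (fmul_memH hρ hs hu hyr).1 n') n
  show (if 0 < n then fmul u (fun k => R0 κ x k + R0 κ y k) n else 0)
      = Cplus (fmul u (R0 κ x)) n + Cplus (fmul u (R0 κ y)) n
  simp only [Cplus]
  split_ifs with h
  · exact h2
  · simp

lemma aop_smul_pt (u : ℤ → ℂ) (κ : ℝ) (c : ℂ) (x : ℤ → ℂ) (n : ℤ) :
    AOp u κ (fun k => c * x k) n = c * AOp u κ x n := by
  have h1 : ∀ m, R0 κ (fun k => c * x k) m = (fun k => c * R0 κ x k) m :=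
    fun m => r0_smul_pt κ c x m
  show Cplus (fmul u (R0 κ (fun k => c * x k))) n = _
  rw [show R0 κ (fun k => c * x k) = fun k => c * R0 κ x k from funext h1]
  show (if 0 < n then fmul u (fun k => c * R0 κ x k) n else 0)
      = c * Cplus (fmul u (R0 κ x)) n
  simp only [Cplus]
  split_ifs with h
  · exact fmul_smul_right u c (R0 κ x) n
  · simp

lemma iter_add_pt {ρ s κ : ℝ} (hρ : 0 < ρ) (hs : 1 ≤ s) (hκ0 : 0 < κ) {u x y : ℤ → ℂ}
    (hu : MemH ρ s u) (hx : MemHplus ρ s x) (hy : MemHplus ρ s y) (j : ℕ) :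
    ∀ n, (AOp u κ)^[j] (fun k => x k + y k) n
      = (AOp u κ)^[j] x n + (AOp u κ)^[j] y n := by
  induction j with
  | zero => intro n; simp
  | succ j ih =>
    intro n
    rw [Function.iterate_succ_apply', Function.iterate_succ_apply',
      Function.iterate_succ_apply']
    have hxj := (iter_bound hρ hs hκ0 hu hx j).1.1
    have hyj := (iter_bound hρ hs hκ0 hu hy j).1.1
    have he : (AOp u κ)^[j] (fun k => x k + y k)
        = fun k => (AOp u κ)^[j] x k + (AOp u κ)^[j] y k := funext ih
    rw [he]
    exact aop_add_pt hρ hs hκ0 hu hxj hyj n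

lemma iter_smul_pt (u : ℤ → ℂ) (κ : ℝ) (c : ℂ) (x : ℤ → ℂ) (j : ℕ) :
    ∀ n, (AOp u κ)^[j] (fun k => c * x k) n = c * (AOp u κ)^[j] x n := by
  induction j with
  | zero => intro n; simp
  | succ j ih =>
    intro n
    rw [Function.iterate_succ_apply', Function.iterate_succ_apply']
    have he : (AOp u κ)^[j] (fun k => c * x k)
        = fun k => c * (AOp u κ)^[j] x k := funext ih
    rw [he]
    exact aop_smul_pt u κ c ((AOp u κ)^[j] x) n

lemma tser_add_pt {ρ s κ : ℝ} (hρ : 0 < ρ) (hs : 1 ≤ s) (hκ0 : 0 < κ) {u x y : ℤ → ℂ}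
    (hu : MemH ρ s u) (hx : MemHplus ρ s x) (hy : MemHplus ρ s y)
    (hr1 : Cs s * anorm ρ s u * κ⁻¹ < 1) (n : ℤ) :
    TserF u κ (fun k => x k + y k) n = TserF u κ x n + TserF u κ y n := by
  rw [TserF, TserF, TserF,
    ← Summable.tsum_add ((tser_bound hρ hs hκ0 hu hx hr1).1 n)
      ((tser_bound hρ hs hκ0 hu hy hr1).1 n)]
  apply tsum_congr
  intro j
  rw [iter_add_pt hρ hs hκ0 hu hx hy j n]
  ring

lemma tser_smul_pt (u : ℤ → ℂ) (κ : ℝ) (c : ℂ) (x : ℤ → ℂ) (n : ℤ) :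
    TserF u κ (fun k => c * x k) n = c * TserF u κ x n := by
  rw [TserF, TserF, ← tsum_mul_left]
  apply tsum_congr
  intro j
  rw [iter_smul_pt u κ c x j n]
  ring

lemma lax_inj {ρ s κ : ℝ} (hρ : 0 < ρ) (hs : 1 ≤ s) (hκ0 : 0 < κ) {u h : ℤ → ℂ}
    (hu : MemH ρ s u) (hr1 : Cs s * anorm ρ s u * κ⁻¹ < 1)
    (hmem : MemH ρ s h) (hsupp : ∀ n ≤ 0, h n = 0)
    (heq : ∀ n, LaxOp u h n + (κ:ℂ) * h n = 0) : ∀ n, h n = 0 := by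
  have hkey : ∀ n, h n = - R0 κ (Toep u h) n := by
    intro n
    rcases le_or_gt n 0 with hn|hn
    · rw [hsupp n hn, r0_zero κ _ hn]
      ring
    · have h1 := heq n
      rw [LaxOp] at h1
      have hne := tne hκ0 hn
      show h n = -(if 0 < n then (2*(n:ℂ)+κ)⁻¹ * Toep u h n else 0)
      rw [if_pos hn]
      field_simp
      linear_combination (2*(n:ℂ)+κ) * h1 - h1 * (2*(n:ℂ)+κ) + h1
  obtain ⟨hTm, hTb⟩ := toep_memH hρ hs hu hmem
  obtain ⟨hRm, hRb⟩ := r0_memH (ρ := ρ) (s := s) hκ0 hTm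
  have hle : anorm ρ s h ≤ 1 * anorm ρ s (R0 κ (Toep u h)) := by
    apply (anorm_dom (c := 1) (by norm_num) (fun n => ?_) hRm).2
    rw [one_mul, hkey n, norm_neg]
  have hfinal : anorm ρ s h ≤ (Cs s * anorm ρ s u * κ⁻¹) * anorm ρ s h := by
    calc anorm ρ s h ≤ 1 * anorm ρ s (R0 κ (Toep u h)) := hle
    _ = anorm ρ s (R0 κ (Toep u h)) := one_mul _
    _ ≤ κ⁻¹ * anorm ρ s (Toep u h) := hRb
    _ ≤ κ⁻¹ * (Cs s * anorm ρ s u * anorm ρ s h) :=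
        mul_le_mul_of_nonneg_left hTb (by positivity)
    _ = (Cs s * anorm ρ s u * κ⁻¹) * anorm ρ s h := by ring
  have h0 : anorm ρ s h = 0 := by
    nlinarith [anorm_nonneg ρ s h]
  exact anorm_eq_zero hmem h0

lemma lax_apply_mem {ρ s κ : ℝ} (hρ : 0 < ρ) (hs : 1 ≤ s) (hκ0 : 0 < κ) {u f : ℤ → ℂ}
    (hu : MemH ρ s u) (hf : MemHplus ρ (s+1) f) :
    MemHplus ρ s f ∧ MemHplus ρ s (fun n => LaxOp u f n + (κ:ℂ) * f n) := by
  have hfs : MemH ρ s f := by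
    apply (anorm_dom (c := 1) (by norm_num) (fun n => ?_) hf.1).1
    rw [one_mul, wt_succ]
    have h1 : wt ρ s n ≤ jb n * wt ρ s n := by
      nlinarith [one_le_jb n, wt_pos ρ s n]
    nlinarith [norm_nonneg (f n), wt_pos ρ s n, jb_pos n]
  have part1 : MemH ρ s (fun n => (2*(n:ℂ)+κ) * f n) := by
    apply (anorm_dom (c := 2 + κ) (by positivity) (fun n => ?_) hf.1).1
    rw [norm_mul, wt_succ]
    have h1 : ‖(2*(n:ℂ)+κ)‖ ≤ (2+κ) * jb n := by
      rw [r0_cast, Complex.norm_real]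
      calc |2*(n:ℝ)+κ| ≤ 2*|(n:ℝ)| + κ := by
            rw [abs_le]
            constructor <;> [nlinarith [abs_nonneg ((n:ℝ)), neg_abs_le ((n:ℝ))];
              nlinarith [le_abs_self ((n:ℝ))]]
      _ ≤ (2+κ) * jb n := by
            nlinarith [abs_le_jb n, one_le_jb n, abs_nonneg ((n:ℝ))]
    calc wt ρ s n * (‖(2*(n:ℂ)+κ)‖ * ‖f n‖)
        ≤ wt ρ s n * (((2+κ) * jb n) * ‖f n‖) := by
          apply mul_le_mul_of_nonneg_left _ (wt_pos ρ s n).le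
          exact mul_le_mul_of_nonneg_right h1 (norm_nonneg _)
    _ = (2+κ) * (jb n * wt ρ s n * ‖f n‖) := by ring
  obtain ⟨hTm, hTb⟩ := toep_memH hρ hs hu hfs
  have hsum := (anorm_add part1 hTm).1
  refine ⟨⟨hfs, hf.2⟩, ⟨?_, ?_⟩⟩
  · rw [memH_iff] at hsum ⊢
    apply hsum.congr
    intro n
    have he : (2*(n:ℂ)+κ) * f n + Toep u f n = LaxOp u f n + (κ:ℂ) * f n := by
      rw [LaxOp]
      ring
    rw [he]
  · intro n hn
    show 2*(n:ℂ) * f n + Toep u f n + (κ:ℂ) * f n = 0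
    rw [hf.2 n hn, show Toep u f n = 0 from cplus_zero _ hn]
    ring

lemma fmul_sub_right {u x y : ℤ → ℂ}
    (hx : ∀ n, Summable fun m => u (n - m) * x m)
    (hy : ∀ n, Summable fun m => u (n - m) * y m) (n : ℤ) :
    fmul u (fun k => x k - y k) n = fmul u x n - fmul u y n := by
  rw [fmul, fmul, fmul, ← Summable.tsum_sub (hx n) (hy n)]
  apply tsum_congr
  intro m
  ring


/-- For `s ≥ 1`, `ρ > 0`, real zero-mean `u ∈ H₀^{ρ,s}` and
`κ > 100 C_s ‖u‖_{ρ,s}`, the point `-κ` is in the resolvent set of `L_u` on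
`H₊^{ρ,s}`: there is a linear operator `R = (L_u+κ)⁻¹` mapping `H₊^{ρ,s}`
bijectively onto `H₊^{ρ,s+1}`, given by the Neumann series
`R = R₀(κ) Σ_j (-1)^j [T_u R₀(κ)]^j` (convergent in operator norm), with
`‖R‖ ≤ (κ - C_s‖u‖_{ρ,s})⁻¹`. -/
theorem lax_resolvent (ρ s κ : ℝ) (hρ : 0 < ρ) (hs : 1 ≤ s) (u : ℤ → ℂ)
    (hu : MemH ρ s u) (hu0 : u 0 = 0) (hur : IsReal u)
    (hκ : 100 * Cs s * anorm ρ s u < κ) :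
    ∃ R : (ℤ → ℂ) →ₗ[ℂ] (ℤ → ℂ),
      (∀ g : ℤ → ℂ, MemHplus ρ s g →
        MemHplus ρ (s + 1) (R g) ∧
        (∀ n : ℤ, LaxOp u (R g) n + (κ : ℂ) * R g n = g n) ∧
        anorm ρ s (R g) ≤ (κ - Cs s * anorm ρ s u)⁻¹ * anorm ρ s g) ∧
      (∀ f : ℤ → ℂ, MemHplus ρ (s + 1) f →
        MemHplus ρ s (fun n => LaxOp u f n + (κ : ℂ) * f n) ∧
        R (fun n => LaxOp u f n + (κ : ℂ) * f n) = f) ∧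
      (∀ ε > (0 : ℝ), ∃ N₀ : ℕ, ∀ N ≥ N₀, ∀ g : ℤ → ℂ, MemHplus ρ s g →
        anorm ρ s (fun n => R g n -
          R0 κ (∑ j ∈ Finset.range N,
            ((-1 : ℂ) ^ j) • ((fun h => Toep u (R0 κ h))^[j] g)) n)
          ≤ ε * anorm ρ s g) := by
  classical
  have hCs0 := Cs_nonneg s
  have hAU0 := anorm_nonneg ρ s u
  have hκ0 : 0 < κ := lt_of_le_of_lt (by positivity) hκ
  set r : ℝ := Cs s * anorm ρ s u * κ⁻¹ with hrdef
  have hr0 : 0 ≤ r := mul_nonneg (mul_nonneg hCs0 hAU0) (inv_nonneg.2 hκ0.le)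
  have hr1 : r < 1 := by
    have h1 : Cs s * anorm ρ s u < κ / 100 := by linarith
    have h2 : r < (κ/100) * κ⁻¹ := by
      rw [hrdef]
      exact mul_lt_mul_of_pos_right h1 (inv_pos.2 hκ0)
    have h3 : (κ/100) * κ⁻¹ = 1/100 := by field_simp
    rw [h3] at h2
    linarith
  have hrκ : (κ - Cs s * anorm ρ s u)⁻¹ = κ⁻¹ * (1-r)⁻¹ := by
    rw [hrdef, ← mul_inv]
    congr 1
    field_simp
  obtain ⟨W, hW⟩ := Submodule.exists_isCompl (HplusSub ρ s)
  set P := (HplusSub ρ s).linearProjOfIsCompl W hW with hP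
  set R₁ : HplusSub ρ s →ₗ[ℂ] (ℤ → ℂ) :=
    { toFun := fun g => RresF u κ g.1
      map_add' := by
        intro a b
        funext n
        show RresF u κ ((a + b : HplusSub ρ s) : ℤ → ℂ) n
          = RresF u κ a.1 n + RresF u κ b.1 n
        have hab : ((a + b : HplusSub ρ s) : ℤ → ℂ) = fun k => a.1 k + b.1 k := rfl
        rw [hab]
        show R0 κ (TserF u κ (fun k => a.1 k + b.1 k)) n
          = R0 κ (TserF u κ a.1) n + R0 κ (TserF u κ b.1) n
        have hT : TserF u κ (fun k => a.1 k + b.1 k)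
            = fun k => TserF u κ a.1 k + TserF u κ b.1 k :=
          funext (tser_add_pt hρ hs hκ0 hu a.2 b.2 hr1)
        rw [hT, r0_add_pt]
      map_smul' := by
        intro c a
        funext n
        show RresF u κ ((c • a : HplusSub ρ s) : ℤ → ℂ) n = c * RresF u κ a.1 n
        have hca : ((c • a : HplusSub ρ s) : ℤ → ℂ) = fun k => c * a.1 k := rfl
        rw [hca]
        show R0 κ (TserF u κ (fun k => c * a.1 k)) n = c * R0 κ (TserF u κ a.1) n
        have hT : TserF u κ (fun k => c * a.1 k)
            = fun k => c * TserF u κ a.1 k := funext (tser_smul_pt u κ c a.1)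
        rw [hT, r0_smul_pt] } with hR₁
  have hRg : ∀ (g : ℤ → ℂ) (hg : MemHplus ρ s g), (R₁.comp P) g = RresF u κ g := by
    intro g hg
    have h1 : P g = ⟨g, hg⟩ := Submodule.linearProjOfIsCompl_apply_left hW ⟨g, hg⟩
    show R₁ (P g) = RresF u κ g
    rw [h1]
    rfl
  refine ⟨R₁.comp P, ?_, ?_, ?_⟩
  · -- direct mapping properties
    intro g hg
    rw [hRg g hg]
    obtain ⟨hmem1, hmem0, hbound⟩ := rres_bound hρ hs hκ0 hu hg hr1
    refine ⟨hmem1, fun n => rres_eq hρ hs hκ0 hu hg hr1 n, ?_⟩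
    rw [hrκ, mul_assoc]
    exact hbound
  · -- inverse direction
    intro f hf
    obtain ⟨hfs, hgmem⟩ := lax_apply_mem hρ hs hκ0 hu hf
    refine ⟨hgmem, ?_⟩
    rw [hRg _ hgmem]
    set gfun : ℤ → ℂ := fun n => LaxOp u f n + (κ:ℂ) * f n with hgf
    obtain ⟨hmem1, hmem0, _⟩ := rres_bound hρ hs hκ0 hu hgmem hr1
    have heq1 : ∀ n, LaxOp u (RresF u κ gfun) n + (κ:ℂ) * RresF u κ gfun n = gfun n :=
      fun n => rres_eq hρ hs hκ0 hu hgmem hr1 n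
    have hhmem : MemH ρ s (fun n => RresF u κ gfun n - f n) :=
      (memH_sub hmem0.1 hfs.1).1
    have hhsupp : ∀ n ≤ 0, (fun k => RresF u κ gfun k - f k) n = 0 := by
      intro n hn
      show RresF u κ gfun n - f n = 0
      rw [hmem0.2 n hn, hfs.2 n hn, sub_zero]
    have hheq : ∀ n, LaxOp u (fun k => RresF u κ gfun k - f k) n
        + (κ:ℂ) * (fun k => RresF u κ gfun k - f k) n = 0 := by
      intro n
      have hToepsub : Toep u (fun k => RresF u κ gfun k - f k) n
          = Toep u (RresF u κ gfun) n - Toep u f n := by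
        show Cplus (fmul u (fun k => RresF u κ gfun k - f k)) n = _
        simp only [Toep, Cplus]
        split_ifs with h
        · exact fmul_sub_right (fun n' => (fmul_memH hρ hs hu hmem0.1).1 n')
            (fun n' => (fmul_memH hρ hs hu hfs.1).1 n') n
        · simp
      have hstep : LaxOp u (fun k => RresF u κ gfun k - f k) n
          + (κ:ℂ) * (fun k => RresF u κ gfun k - f k) n
          = (LaxOp u (RresF u κ gfun) n + (κ:ℂ) * RresF u κ gfun n)
            - (LaxOp u f n + (κ:ℂ) * f n) := by
        simp only [LaxOp]
        rw [hToepsub]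
        ring
      rw [hstep, heq1 n]
      have h2 : gfun n = LaxOp u f n + (κ:ℂ) * f n := rfl
      rw [h2, sub_self]
    have hz := lax_inj hρ hs hκ0 hu hr1 hhmem
      (fun n hn => hhsupp n hn) hheq
    funext n
    exact sub_eq_zero.mp (hz n)
  · -- Neumann series approximation
    intro ε hε
    have htend : Filter.Tendsto (fun N : ℕ => κ⁻¹ * (1-r)⁻¹ * r^N)
        Filter.atTop (nhds 0) := by
      have h1 := tendsto_pow_atTop_nhds_zero_of_lt_one hr0 hr1
      simpa using h1.const_mul (κ⁻¹ * (1-r)⁻¹)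
    have hev : ∀ᶠ N in Filter.atTop, κ⁻¹ * (1-r)⁻¹ * r^N < ε :=
      htend.eventually (gt_mem_nhds hε)
    obtain ⟨N₀, hN₀⟩ := Filter.eventually_atTop.mp hev
    refine ⟨N₀, ?_⟩
    intro N hN g hg
    have hsumj := (tser_bound hρ hs hκ0 hu hg hr1).1
    obtain ⟨htail1, htail2, htail3⟩ := tser_tail hρ hs hκ0 hu hg hr1 N
    rw [hRg g hg]
    have hptw : ∀ n, RresF u κ g n -
        R0 κ (∑ j ∈ Finset.range N,
          ((-1 : ℂ) ^ j) • ((fun h => Toep u (R0 κ h))^[j] g)) n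
        = R0 κ (fun k => ∑' j : ℕ, (-1:ℂ)^(j+N) * (AOp u κ)^[j+N] g k) n := by
      intro n
      have hS : (∑ j ∈ Finset.range N,
          ((-1 : ℂ) ^ j) • ((fun h => Toep u (R0 κ h))^[j] g)) n
          = ∑ j ∈ Finset.range N, (-1:ℂ)^j * (AOp u κ)^[j] g n := by
        rw [Finset.sum_apply]
        rfl
      have hsplit : TserF u κ g n
          = (∑ j ∈ Finset.range N, (-1:ℂ)^j * (AOp u κ)^[j] g n)
            + ∑' j : ℕ, (-1:ℂ)^(j+N) * (AOp u κ)^[j+N] g n :=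
        (Summable.sum_add_tsum_nat_add N (hsumj n)).symm
      rcases le_or_gt n 0 with hn|hn
      · show R0 κ (TserF u κ g) n - _ = _
        rw [r0_zero κ _ hn, r0_zero κ _ hn, r0_zero κ _ hn, sub_zero]
      · show (if 0 < n then (2*(n:ℂ)+κ)⁻¹ * TserF u κ g n else 0)
            - (if 0 < n then (2*(n:ℂ)+κ)⁻¹
                * (∑ j ∈ Finset.range N,
                    ((-1 : ℂ) ^ j) • ((fun h => Toep u (R0 κ h))^[j] g)) n else 0)
            = (if 0 < n then (2*(n:ℂ)+κ)⁻¹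
                * ∑' j : ℕ, (-1:ℂ)^(j+N) * (AOp u κ)^[j+N] g n else 0)
        rw [if_pos hn, if_pos hn, if_pos hn, hS, hsplit]
        ring
    rw [anorm_congr hptw]
    obtain ⟨hR0m, hR0b⟩ := r0_memH (ρ := ρ) (s := s) hκ0 htail2
    calc anorm ρ s (R0 κ (fun k => ∑' j : ℕ, (-1:ℂ)^(j+N) * (AOp u κ)^[j+N] g k))
        ≤ κ⁻¹ * anorm ρ s (fun k => ∑' j : ℕ, (-1:ℂ)^(j+N) * (AOp u κ)^[j+N] g k) := hR0b
    _ ≤ κ⁻¹ * (r^N * ((1-r)⁻¹ * anorm ρ s g)) :=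
        mul_le_mul_of_nonneg_left htail3 (inv_nonneg.2 hκ0.le)
    _ = (κ⁻¹ * (1-r)⁻¹ * r^N) * anorm ρ s g := by ring
    _ ≤ ε * anorm ρ s g :=
        mul_le_mul_of_nonneg_right (le_of_lt (hN₀ N hN)) (anorm_nonneg ρ s g)

end BO
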